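/- arXiv:2109.04567 — 6 statements merged into one kernel-verified Lean document; each statement's English description precedes it below -/
import Mathlib

section
/- Let G be a connected undirected graph with non-negative edge weights and cycle space of dimension ν. Suppose C₁, …, C_ν are cycles of G and S₁, …, S_ν are vectors in ℤ₂^E such that for every i with 1 ≤ i ≤ ν: (prefix orthogonality) ⟨C_j, S_i⟩ = 0 for all 1 ≤ j < i; (non-orthogonality) ⟨C_i, S_i⟩ = 1; and (shortness) C_i is a cycle of minimum weight among all cycles C of G with ⟨C, S_i⟩ = 1. Then {C₁, …, C_ν} is a minimum cycle basis of G. -/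
open scoped Classical

noncomputable section

namespace PaperMCB

variable {V : Type*} [Fintype V] [DecidableEq V]

/-- The boundary map sending a `ℤ₂`-chain of edges to the `ℤ₂`-chain of vertices
recording the parity of the degree of each vertex in the chain. -/
def boundaryMap (G : SimpleGraph V) :
    (G.edgeSet → ZMod 2) →ₗ[ZMod 2] (V → ZMod 2) :=
  Matrix.mulVecLin (Matrix.of fun (v : V) (e : G.edgeSet) =>
    if v ∈ (e : Sym2 V) then (1 : ZMod 2) else 0)

/-- The cycle space of a graph over `ℤ₂`: chains of edges in which every vertex
has even degree. -/
def cycleSpace (G : SimpleGraph V) : Submodule (ZMod 2) (G.edgeSet → ZMod 2) :=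
  LinearMap.ker (boundaryMap G)

/-- The weight of a cycle: the sum of the weights of its edges. -/
def cycleWeight (G : SimpleGraph V) (w : Sym2 V → ℝ) (c : G.edgeSet → ZMod 2) : ℝ :=
  ∑ e : G.edgeSet, if c e = 1 then w (e : Sym2 V) else 0

/-- The weight of a set of cycles: the sum of the weights of its elements. -/
def setWeight (G : SimpleGraph V) (w : Sym2 V → ℝ) (B : Finset (G.edgeSet → ZMod 2)) : ℝ :=
  ∑ c ∈ B, cycleWeight G w c

/-- A set of cycles is a cycle basis if it is linearly independent and spans the
cycle space. -/
def IsCycleBasis (G : SimpleGraph V) (B : Finset (G.edgeSet → ZMod 2)) : Prop :=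
  LinearIndependent (ZMod 2)
    (fun c : (B : Set (G.edgeSet → ZMod 2)) => (c : G.edgeSet → ZMod 2)) ∧
  Submodule.span (ZMod 2) (B : Set (G.edgeSet → ZMod 2)) = cycleSpace G

/-- A minimum cycle basis is a cycle basis of minimum total weight. -/
def IsMinCycleBasis (G : SimpleGraph V) (w : Sym2 V → ℝ)
    (B : Finset (G.edgeSet → ZMod 2)) : Prop :=
  IsCycleBasis G B ∧
  ∀ B' : Finset (G.edgeSet → ZMod 2), IsCycleBasis G B' →
    setWeight G w B ≤ setWeight G w B'

/-- The `ℤ₂` incidence vector of (the edge set of) a walk. -/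
def walkChain (G : SimpleGraph V) {u v : V} (W : G.Walk u v) : G.edgeSet → ZMod 2 :=
  fun e => if (e : Sym2 V) ∈ W.edges then 1 else 0

/-- The weight of a walk: the sum of the weights of its edges. -/
def walkWeight (w : Sym2 V → ℝ) {G : SimpleGraph V} {u v : V} (W : G.Walk u v) : ℝ :=
  (W.edges.map w).sum

/-- An elementary cycle: the incidence vector of the edge set of a closed walk that is
a graph cycle (connected, all degrees two). -/
def IsElementaryCycle (G : SimpleGraph V) (c : G.edgeSet → ZMod 2) : Prop :=
  ∃ (u : V) (W : G.Walk u u), W.IsCycle ∧ walkChain G W = c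

/-- A tight (isometric) cycle: an elementary cycle containing a shortest path between
every pair of its vertices. -/
def IsTight (G : SimpleGraph V) (w : Sym2 V → ℝ) (c : G.edgeSet → ZMod 2) : Prop :=
  ∃ (u : V) (W : G.Walk u u), W.IsCycle ∧ walkChain G W = c ∧
    ∀ x y : V, x ∈ W.support → y ∈ W.support →
      ∃ P : G.Walk x y, (∀ e ∈ P.edges, e ∈ W.edges) ∧
        ∀ Q : G.Walk x y, walkWeight w P ≤ walkWeight w Q


/-- The `ℤ₂` inner product of two edge chains. -/
def inner2 (G : SimpleGraph V) (x y : G.edgeSet → ZMod 2) : ZMod 2 :=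
  ∑ e : G.edgeSet, x e * y e


set_option linter.unusedSectionVars false in
lemma inner2_sum (G : SimpleGraph V) {ι : Type*} (s : Finset ι)
    (f : ι → ZMod 2) (v : ι → (G.edgeSet → ZMod 2)) (y : G.edgeSet → ZMod 2) :
    inner2 G (∑ i ∈ s, f i • v i) y = ∑ i ∈ s, f i * inner2 G (v i) y := by
  simp only [inner2, Finset.sum_apply, Pi.smul_apply, smul_eq_mul, Finset.sum_mul,
    Finset.mul_sum, mul_assoc]
  exact Finset.sum_comm

set_option linter.unusedSectionVars false in
lemma inner2_zero (G : SimpleGraph V) (y : G.edgeSet → ZMod 2) :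
    inner2 G 0 y = 0 := by simp [inner2]

/-- **de Pina's theorem.** If cycles `C₁, …, C_ν` and support vectors `S₁, …, S_ν`
satisfy prefix orthogonality, non-orthogonality and shortness, then `{C₁, …, C_ν}` is a
minimum cycle basis. -/
theorem depina (G : SimpleGraph V) (hG : G.Connected)
    (w : Sym2 V → ℝ) (hw : ∀ e, 0 ≤ w e)
    (C S : Fin (Module.finrank (ZMod 2) (cycleSpace G)) → (G.edgeSet → ZMod 2))
    (hC : ∀ i, C i ∈ cycleSpace G)
    (horth : ∀ i j, j < i → inner2 G (C j) (S i) = 0)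
    (hnon : ∀ i, inner2 G (C i) (S i) = 1)
    (hshort : ∀ i, ∀ c ∈ cycleSpace G, inner2 G c (S i) = 1 →
      cycleWeight G w (C i) ≤ cycleWeight G w c) :
    IsMinCycleBasis G w (Finset.image C Finset.univ) := by
  classical
  have hzmod : ∀ a : ZMod 2, a ≠ 0 → a = 1 := by decide
  -- injectivity of C
  have hCinj : Function.Injective C := by
    intro i j hij
    by_contra hne
    rcases lt_or_gt_of_ne hne with h | h
    · have h0 := horth j i h
      rw [hij, hnon j] at h0
      exact one_ne_zero h0
    · have h0 := horth i j h
      rw [← hij, hnon i] at h0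
      exact one_ne_zero h0
  -- linear independence of C
  have hCli : LinearIndependent (ZMod 2) C := by
    rw [Fintype.linearIndependent_iff]
    intro g hg
    by_contra hex
    push_neg at hex
    obtain ⟨i0, hi0⟩ := hex
    have ht : (Finset.univ.filter (fun i => g i ≠ 0)).Nonempty := ⟨i0, by simp [hi0]⟩
    obtain ⟨i, hgi, hmax⟩ : ∃ i, g i ≠ 0 ∧ ∀ j, g j ≠ 0 → j ≤ i := by
      refine ⟨(Finset.univ.filter (fun i => g i ≠ 0)).max' ht, ?_, ?_⟩
      · exact (Finset.mem_filter.mp (Finset.max'_mem _ ht)).2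
      · intro j hj
        exact Finset.le_max' _ j (by simp [hj])
    have hkey : inner2 G (∑ j, g j • C j) (S i) = g i := by
      rw [inner2_sum]
      rw [Finset.sum_eq_single i]
      · rw [hnon i, mul_one]
      · intro j _ hji
        rcases lt_or_gt_of_ne hji with h | h
        · rw [horth i j h, mul_zero]
        · have hgj : g j = 0 := by
            by_contra hgj
            exact absurd (hmax j hgj) (not_le.mpr h)
          rw [hgj, zero_mul]
      · simp
    rw [hg, inner2_zero] at hkey
    exact hgi hkey.symm
  -- the subtype family
  let C' : Fin (Module.finrank (ZMod 2) (cycleSpace G)) → cycleSpace G :=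
    fun i => ⟨C i, hC i⟩
  have hcomp : (cycleSpace G).subtype ∘ C' = C := rfl
  have hC'li : LinearIndependent (ZMod 2) C' :=
    LinearIndependent.of_comp (cycleSpace G).subtype (by rw [hcomp]; exact hCli)
  have hspan' : Submodule.span (ZMod 2) (Set.range C') = ⊤ :=
    hC'li.span_eq_top_of_card_eq_finrank' (Fintype.card_fin _)
  have hspanC : Submodule.span (ZMod 2) (Set.range C) = cycleSpace G := by
    have h2 := congrArg (Submodule.map (cycleSpace G).subtype) hspan'
    rwa [Submodule.map_span, Submodule.map_top, Submodule.range_subtype,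
      ← Set.range_comp, hcomp] at h2
  have hBset : ((Finset.image C Finset.univ : Finset _) :
      Set (G.edgeSet → ZMod 2)) = Set.range C := by
    simp
  constructor
  · constructor
    · rw [hBset]
      exact (linearIndepOn_id_range_iff hCinj).mpr hCli
    · rw [hBset]
      exact hspanC
  · intro B' hB'
    obtain ⟨hli, hsp⟩ := hB'
    have hmem : ∀ d ∈ B', d ∈ cycleSpace G := fun d hd => by
      rw [← hsp]; exact Submodule.subset_span hd
    -- B' as a basis of the cycle space
    let Dc : ((B' : Set (G.edgeSet → ZMod 2))) → cycleSpace G :=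
      fun d => ⟨(d : G.edgeSet → ZMod 2), hmem d d.2⟩
    have hcomp2 : (cycleSpace G).subtype ∘ Dc =
        (fun c : (B' : Set (G.edgeSet → ZMod 2)) => (c : G.edgeSet → ZMod 2)) := rfl
    have hDcli : LinearIndependent (ZMod 2) Dc :=
      LinearIndependent.of_comp (cycleSpace G).subtype (by rw [hcomp2]; exact hli)
    have hDcspan : Submodule.span (ZMod 2) (Set.range Dc) = ⊤ := by
      apply Submodule.map_injective_of_injective (cycleSpace G).injective_subtype
      rw [Submodule.map_span, Submodule.map_top, Submodule.range_subtype,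
        ← Set.range_comp, hcomp2, Subtype.range_coe]
      exact hsp
    let b : Module.Basis _ (ZMod 2) (cycleSpace G) := Module.Basis.mk hDcli hDcspan.ge
    have hcard : Fintype.card ((B' : Set (G.edgeSet → ZMod 2))) =
        Module.finrank (ZMod 2) (cycleSpace G) := (Module.finrank_eq_card_basis b).symm
    let e : Fin (Module.finrank (ZMod 2) (cycleSpace G)) ≃
        ((B' : Set (G.edgeSet → ZMod 2))) := (Fintype.equivFinOfCardEq hcard).symm
    let D : Fin (Module.finrank (ZMod 2) (cycleSpace G)) → (G.edgeSet → ZMod 2) :=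
      fun k => ((e k) : G.edgeSet → ZMod 2)
    have hDmem : ∀ k, D k ∈ cycleSpace G := fun k => hmem _ (e k).2
    -- sum over B' indexed by Fin ν
    have hsum : ∀ {β : Type} [AddCommMonoid β], ∀ f : (G.edgeSet → ZMod 2) → β,
        ∑ d ∈ B', f d = ∑ k, f (D k) := by
      intro β _ f
      rw [Finset.sum_subtype B' (fun x => Iff.symm Finset.mem_coe) f]
      exact (Equiv.sum_comp e (fun x : ((B' : Set (G.edgeSet → ZMod 2))) => f x)).symm
    -- coefficients of C in terms of B'
    have hCsp : ∀ j, ∃ f : (G.edgeSet → ZMod 2) → ZMod 2, ∑ d ∈ B', f d • d = C j := by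
      intro j
      obtain ⟨f, -, hf⟩ := Submodule.mem_span_finset.mp (by rw [hsp]; exact hC j)
      exact ⟨f, hf⟩
    choose T hT using hCsp
    -- matrices
    let M : Matrix (Fin (Module.finrank (ZMod 2) (cycleSpace G)))
        (Fin (Module.finrank (ZMod 2) (cycleSpace G))) (ZMod 2) :=
      fun i j => inner2 G (C j) (S i)
    let N : Matrix (Fin (Module.finrank (ZMod 2) (cycleSpace G)))
        (Fin (Module.finrank (ZMod 2) (cycleSpace G))) (ZMod 2) :=
      fun i k => inner2 G (D k) (S i)
    let Tm : Matrix (Fin (Module.finrank (ZMod 2) (cycleSpace G)))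
        (Fin (Module.finrank (ZMod 2) (cycleSpace G))) (ZMod 2) :=
      fun k j => T j (D k)
    have hM : M = N * Tm := by
      ext i j
      rw [Matrix.mul_apply]
      show inner2 G (C j) (S i) = _
      rw [← hT j, inner2_sum]
      rw [hsum (fun d => T j d * inner2 G d (S i))]
      exact Finset.sum_congr rfl fun k _ => mul_comm _ _
    have hMtri : M.BlockTriangular id := fun i j h => horth i j h
    have hdetM : M.det = 1 := by
      rw [Matrix.det_of_upperTriangular hMtri]
      exact Finset.prod_eq_one fun i _ => hnon i
    have hdetN : N.det ≠ 0 := by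
      intro h0
      rw [hM, Matrix.det_mul, h0, zero_mul] at hdetM
      exact one_ne_zero hdetM.symm
    -- find a permutation
    have hperm : ∃ σ : Equiv.Perm (Fin (Module.finrank (ZMod 2) (cycleSpace G))),
        ∀ i, N (σ i) i ≠ 0 := by
      by_contra hcon
      push_neg at hcon
      apply hdetN
      rw [Matrix.det_apply]
      apply Finset.sum_eq_zero
      intro σ _
      obtain ⟨i, hi⟩ := hcon σ
      have hp : (∏ i, N (σ i) i) = 0 := Finset.prod_eq_zero (Finset.mem_univ i) hi
      rw [hp, smul_zero]
    obtain ⟨σ, hσ⟩ := hperm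
    have hσ1 : ∀ i, inner2 G (D (σ⁻¹ i)) (S i) = 1 := by
      intro i
      have h2 := hzmod _ (hσ (σ⁻¹ i))
      rwa [show σ (σ⁻¹ i) = i from σ.apply_symm_apply i] at h2
    -- final weight comparison
    have hwC : ∀ i, cycleWeight G w (C i) ≤ cycleWeight G w (D (σ⁻¹ i)) :=
      fun i => hshort i (D (σ⁻¹ i)) (hDmem _) (hσ1 i)
    unfold setWeight
    rw [Finset.sum_image (fun x _ y _ h => hCinj h)]
    rw [hsum (cycleWeight G w)]
    calc ∑ i, cycleWeight G w (C i)
        ≤ ∑ i, cycleWeight G w (D (σ⁻¹ i)) := Finset.sum_le_sum fun i _ => hwC i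
      _ = ∑ k, cycleWeight G w (D k) :=
          Equiv.sum_comp (σ⁻¹ : Equiv.Perm _) (fun k => cycleWeight G w (D k))


end PaperMCB
end
end

section
/- Let G be a connected undirected graph with non-negative edge weights. Then there exists a minimum cycle basis of G all of whose elements are elementary cycles. -/
open scoped Classical

noncomputable section

namespace PaperMCB

variable {V : Type*} [Fintype V] [DecidableEq V]

lemma z2cases (a : ZMod 2) : a = 0 ∨ a = 1 := by revert a; decide

lemma z2add (a : ZMod 2) : a + a = 0 := by revert a; decide

lemma boundaryMap_apply (G : SimpleGraph V) (c : G.edgeSet → ZMod 2) (v : V) :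
    boundaryMap G c v = ∑ e : G.edgeSet, if v ∈ (e : Sym2 V) then c e else 0 := by
  simp [boundaryMap, Matrix.mulVecLin_apply, Matrix.mulVec, dotProduct, ite_mul]

lemma walkChain_cons (G : SimpleGraph V) {u x v : V} (h : G.Adj u x) (p : G.Walk x v)
    (hne : s(u, x) ∉ p.edges) :
    walkChain G (SimpleGraph.Walk.cons h p) =
      ((fun e => if (e : Sym2 V) = s(u, x) then 1 else 0) : G.edgeSet → ZMod 2) + walkChain G p := by
  funext e
  simp only [walkChain, SimpleGraph.Walk.edges_cons, List.mem_cons, Pi.add_apply]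
  by_cases he : (e : Sym2 V) = s(u, x)
  · rw [if_pos (Or.inl he), if_pos he, if_neg (by rw [he]; exact hne)]; ring
  · by_cases he' : (e : Sym2 V) ∈ p.edges
    · rw [if_pos (Or.inr he'), if_neg he, if_pos he']; ring
    · rw [if_neg (by tauto), if_neg he, if_neg he']; ring

lemma boundaryMap_single (G : SimpleGraph V) {u x : V} (h : G.Adj u x) :
    boundaryMap G ((fun e => if (e : Sym2 V) = s(u, x) then 1 else 0) : G.edgeSet → ZMod 2) =
      fun z => (if z = u then (1 : ZMod 2) else 0) + (if z = x then 1 else 0) := by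
  funext z
  rw [boundaryMap_apply]
  have hm : s(u, x) ∈ G.edgeSet := h
  rw [Finset.sum_eq_single (⟨s(u, x), hm⟩ : G.edgeSet)]
  · simp only [Sym2.mem_iff]
    by_cases hz : z = u
    · subst hz
      simp [h.ne]
    · by_cases hz' : z = x
      · subst hz'
        simp [hz]
      · rw [if_neg (by tauto), if_neg hz, if_neg hz']; ring
  · intro e _ hne
    have hval : ¬((e : Sym2 V) = s(u, x)) := fun hval => hne (Subtype.ext hval)
    rw [if_neg hval]
    split <;> rfl
  · intro habs; exact absurd (Finset.mem_univ _) habs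

lemma boundaryMap_walkChain_trail (G : SimpleGraph V) {u v : V} (p : G.Walk u v)
    (hp : p.IsTrail) :
    boundaryMap G (walkChain G p) =
      fun z => (if z = u then (1 : ZMod 2) else 0) + (if z = v then 1 else 0) := by
  induction p with
  | nil =>
    rename_i x
    have h0 : walkChain G (SimpleGraph.Walk.nil : G.Walk x x) = 0 := by
      funext e; simp [walkChain]
    rw [h0, map_zero]
    funext z
    rw [Pi.zero_apply, z2add]
  | @cons a b w h p ih =>
    rw [SimpleGraph.Walk.isTrail_cons] at hp
    rw [walkChain_cons G h p hp.2, map_add, boundaryMap_single G h, ih hp.1]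
    funext z
    simp only [Pi.add_apply]
    have key : ∀ a b c : ZMod 2, a + b + (b + c) = a + c := by decide
    exact key _ _ _

lemma walkChain_closed_mem_cycleSpace (G : SimpleGraph V) {u : V} (W : G.Walk u u)
    (hW : W.IsTrail) : walkChain G W ∈ cycleSpace G := by
  have := boundaryMap_walkChain_trail G W hW
  simp only [cycleSpace, LinearMap.mem_ker]
  rw [this]
  funext z
  rw [z2add]; rfl


set_option linter.unusedSectionVars false

/-- The support of a chain, as a finset of edges. -/
def chainSupp (G : SimpleGraph V) (c : G.edgeSet → ZMod 2) : Finset G.edgeSet :=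
  Finset.univ.filter (fun e => c e = 1)

lemma mem_chainSupp {G : SimpleGraph V} {c : G.edgeSet → ZMod 2} {e : G.edgeSet} :
    e ∈ chainSupp G c ↔ c e = 1 := by
  simp [chainSupp]

lemma chain_eq_zero_of_supp_empty {G : SimpleGraph V} {c : G.edgeSet → ZMod 2}
    (h : chainSupp G c = ∅) : c = 0 := by
  funext e
  rcases z2cases (c e) with h0 | h1
  · exact h0
  · exact absurd (mem_chainSupp.mpr h1) (by simp [h])

/-- The value of a chain on an unordered pair (0 on non-edges). -/
def chainVal (G : SimpleGraph V) (c : G.edgeSet → ZMod 2) (e : Sym2 V) : ZMod 2 :=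
  if h : e ∈ G.edgeSet then c ⟨e, h⟩ else 0

lemma chainVal_coe (G : SimpleGraph V) (c : G.edgeSet → ZMod 2) (e : G.edgeSet) :
    chainVal G c (e : Sym2 V) = c e := by
  rw [chainVal, dif_pos e.2]

/-- The subgraph of `G` supported by the chain `c`. -/
def suppGraph (G : SimpleGraph V) (c : G.edgeSet → ZMod 2) : SimpleGraph V where
  Adj a b := G.Adj a b ∧ chainVal G c s(a, b) = 1
  symm := ⟨fun a b h => ⟨h.1.symm, by rw [Sym2.eq_swap]; exact h.2⟩⟩
  loopless := ⟨fun a h => G.loopless.irrefl a h.1⟩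

lemma suppGraph_le (G : SimpleGraph V) (c : G.edgeSet → ZMod 2) : suppGraph G c ≤ G :=
  fun _ _ h => h.1

lemma chain_one_of_mem_suppGraph (G : SimpleGraph V) (c : G.edgeSet → ZMod 2) (e : G.edgeSet)
    (h : (e : Sym2 V) ∈ (suppGraph G c).edgeSet) : c e = 1 := by
  rw [← chainVal_coe G c e]
  obtain ⟨ev, hg⟩ := e
  revert h hg
  induction ev using Sym2.ind with
  | _ a b =>
    intro hg h
    exact ((SimpleGraph.mem_edgeSet _).mp h).2

lemma exists_second_edge (G : SimpleGraph V) {c : G.edgeSet → ZMod 2} (hc : c ∈ cycleSpace G)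
    (e0 : G.edgeSet) (he0 : c e0 = 1) {v : V} (hv : v ∈ (e0 : Sym2 V)) :
    ∃ e1 : G.edgeSet, c e1 = 1 ∧ v ∈ (e1 : Sym2 V) ∧ e1 ≠ e0 := by
  by_contra hcon
  push_neg at hcon
  have hbd : boundaryMap G c v = 0 := congrFun (LinearMap.mem_ker.mp hc) v
  rw [boundaryMap_apply] at hbd
  rw [Finset.sum_eq_single e0] at hbd
  · rw [if_pos hv, he0] at hbd
    exact one_ne_zero hbd
  · intro e _ hne
    by_cases h1 : v ∈ (e : Sym2 V)
    · rcases z2cases (c e) with h2 | h2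
      · rw [if_pos h1, h2]
      · exact absurd (hcon e h2 h1) hne
    · rw [if_neg h1]
  · intro habs; exact absurd (Finset.mem_univ _) habs

lemma exists_elementary_subcycle (G : SimpleGraph V) {c : G.edgeSet → ZMod 2}
    (hc : c ∈ cycleSpace G) (hne : (chainSupp G c).Nonempty) :
    ∃ x, IsElementaryCycle G x ∧ x ∈ cycleSpace G ∧
      chainSupp G x ⊆ chainSupp G c ∧ (chainSupp G x).Nonempty := by
  classical
  set H := suppGraph G c with hH
  have hHG : H ≤ G := suppGraph_le G c
  -- a first edge of H
  obtain ⟨e0, he0m⟩ := hne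
  have he0 : c e0 = 1 := mem_chainSupp.mp he0m
  obtain ⟨e0v, he0G⟩ := e0
  revert he0 he0m
  induction e0v using Sym2.ind with
  | _ a b =>
  intro he0m he0
  have hab : H.Adj a b := ⟨(SimpleGraph.mem_edgeSet _).mp he0G, by
    rw [show s(a,b) = ((⟨s(a,b), he0G⟩ : G.edgeSet) : Sym2 V) from rfl, chainVal_coe]; exact he0⟩
  -- longest path in H
  set PS : Set ℕ := {n | ∃ (x y : V) (p : H.Walk x y), p.IsPath ∧ p.length = n} with hPS
  have hPS1 : 1 ∈ PS := by
    refine ⟨a, b, SimpleGraph.Walk.cons hab SimpleGraph.Walk.nil, ?_, rfl⟩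
    rw [SimpleGraph.Walk.cons_isPath_iff]
    exact ⟨SimpleGraph.Walk.IsPath.nil, by simp [hab.ne]⟩
  have hbdd : BddAbove PS := by
    refine ⟨Fintype.card V, fun n hn => ?_⟩
    obtain ⟨x, y, p, hp, hl⟩ := hn
    exact hl ▸ hp.length_lt.le
  have hmem := Nat.sSup_mem ⟨1, hPS1⟩ hbdd
  set n := sSup PS with hns
  have hn1 : 1 ≤ n := le_csSup hbdd hPS1
  obtain ⟨x0, y0, p0, hp0, hl0⟩ := hmem
  obtain ⟨v, u, q, hq, hlq⟩ : ∃ (v u : V) (q : H.Walk v u), q.IsPath ∧ q.length = n :=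
    ⟨y0, x0, p0.reverse, hp0.reverse, by simpa using hl0⟩
  clear hl0 hp0
  cases q with
  | nil => simp at hlq; omega
  | cons hvx q' =>
    rename_i x
    have he0x : s(v, x) ∈ G.edgeSet := hvx.1
    have he0c : c ⟨s(v, x), he0x⟩ = 1 := by
      have h2 := hvx.2
      rwa [show s(v,x) = ((⟨s(v,x), he0x⟩ : G.edgeSet) : Sym2 V) from rfl, chainVal_coe] at h2
    obtain ⟨e1, he1c, hve1, he1ne⟩ := exists_second_edge G hc ⟨s(v, x), he0x⟩ he0c
      (by rw [Sym2.mem_iff]; exact Or.inl rfl)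
    obtain ⟨y, hey⟩ := Sym2.mem_iff_exists.mp hve1
    have hgvy : s(v, y) ∈ G.edgeSet := hey ▸ e1.2
    have hcvy : c ⟨s(v, y), hgvy⟩ = 1 := by
      rw [show (⟨s(v, y), hgvy⟩ : G.edgeSet) = e1 from Subtype.ext hey.symm]; exact he1c
    have hvy : H.Adj v y := ⟨(SimpleGraph.mem_edgeSet _).mp hgvy, by
      rw [show s(v,y) = ((⟨s(v,y), hgvy⟩ : G.edgeSet) : Sym2 V) from rfl, chainVal_coe]; exact hcvy⟩
    have hsne : s(v, y) ≠ s(v, x) := by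
      intro hs
      exact he1ne (Subtype.ext (hey.trans hs))
    have hvnot : v ∉ q'.support := ((SimpleGraph.Walk.cons_isPath_iff _ _).mp hq).2
    by_cases hysup : y ∈ (SimpleGraph.Walk.cons hvx q').support
    · -- build a cycle
      have hedge_not : s(v, y) ∉ (SimpleGraph.Walk.cons hvx q').edges := by
        rw [SimpleGraph.Walk.edges_cons]
        intro hmem
        rcases List.mem_cons.mp hmem with h | h
        · exact hsne h
        · exact hvnot (SimpleGraph.Walk.fst_mem_support_of_mem_edges q' h)
      set Q := SimpleGraph.Walk.cons hvx q' with hQ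
      set t := Q.takeUntil y hysup with ht
      have htp : t.IsPath := hq.takeUntil hysup
      have hte : t.edges ⊆ Q.edges := SimpleGraph.Walk.edges_takeUntil_subset Q hysup
      have hWc : (SimpleGraph.Walk.cons hvy t.reverse).IsCycle := by
        rw [SimpleGraph.Walk.cons_isCycle_iff]
        refine ⟨htp.reverse, ?_⟩
        rw [SimpleGraph.Walk.edges_reverse, List.mem_reverse]
        exact fun h => hedge_not (hte h)
      set W := SimpleGraph.Walk.cons hvy t.reverse with hW
      have hWe : ∀ e ∈ W.edges, e ∈ G.edgeSet :=
        fun e he => SimpleGraph.edgeSet_mono hHG (SimpleGraph.Walk.edges_subset_edgeSet W he)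
      refine ⟨walkChain G (W.transfer G hWe), ⟨v, W.transfer G hWe, hWc.transfer hWe, rfl⟩, ?_, ?_, ?_⟩
      · exact walkChain_closed_mem_cycleSpace G _ (hWc.transfer hWe).isTrail
      · intro e hme
        have hx1 : (e : Sym2 V) ∈ W.edges := by
          have h3 := mem_chainSupp.mp hme
          rw [walkChain] at h3
          by_cases hmm : (e : Sym2 V) ∈ (W.transfer G hWe).edges
          · rwa [SimpleGraph.Walk.edges_transfer] at hmm
          · rw [if_neg hmm] at h3; exact absurd h3 (by decide)
        exact mem_chainSupp.mpr (chain_one_of_mem_suppGraph G c e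
          (SimpleGraph.Walk.edges_subset_edgeSet W hx1))
      · have hmem : s(v, y) ∈ (W.transfer G hWe).edges := by
          rw [SimpleGraph.Walk.edges_transfer, hW, SimpleGraph.Walk.edges_cons]
          exact List.mem_cons_self
        exact ⟨⟨s(v, y), hgvy⟩, mem_chainSupp.mpr (by simp only [walkChain]; exact if_pos hmem)⟩
    · -- extend the path, contradiction with maximality
      have hlong : (SimpleGraph.Walk.cons hvy.symm (SimpleGraph.Walk.cons hvx q')).IsPath := by
        rw [SimpleGraph.Walk.cons_isPath_iff]
        exact ⟨hq, hysup⟩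
      have hmem2 : (n + 1) ∈ PS :=
        ⟨y, u, _, hlong, by
          simp only [SimpleGraph.Walk.length_cons] at hlq ⊢
          omega⟩
      have := le_csSup hbdd hmem2
      omega


lemma elem_mem_cycleSpace {G : SimpleGraph V} {x : G.edgeSet → ZMod 2}
    (h : IsElementaryCycle G x) : x ∈ cycleSpace G := by
  obtain ⟨u, W, hW, rfl⟩ := h
  exact walkChain_closed_mem_cycleSpace G W hW.isTrail

lemma decomp (G : SimpleGraph V) (k : ℕ) :
    ∀ (c : G.edgeSet → ZMod 2), (chainSupp G c).card = k → c ∈ cycleSpace G →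
    ∃ S : Finset (G.edgeSet → ZMod 2), (∑ x ∈ S, x) = c ∧
      (∀ x ∈ S, IsElementaryCycle G x ∧ chainSupp G x ⊆ chainSupp G c ∧
        (chainSupp G x).Nonempty) ∧
      (∀ x ∈ S, ∀ y ∈ S, x ≠ y → Disjoint (chainSupp G x) (chainSupp G y)) := by
  induction k using Nat.strong_induction_on with
  | _ k ih =>
    intro c hk hc
    rcases Finset.eq_empty_or_nonempty (chainSupp G c) with hemp | hne
    · refine ⟨∅, ?_, by simp, by simp⟩
      rw [Finset.sum_empty, chain_eq_zero_of_supp_empty hemp]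
    · obtain ⟨x, hxel, hxcs, hxsub, hxne⟩ := exists_elementary_subcycle G hc hne
      set c' := c + x with hc'def
      have hsupp' : chainSupp G c' = chainSupp G c \ chainSupp G x := by
        ext e
        simp only [mem_chainSupp, Finset.mem_sdiff, hc'def, Pi.add_apply]
        rcases z2cases (x e) with g0 | g1
        · rw [g0, add_zero]
          exact (and_iff_left (by decide)).symm
        · have h1 : c e = 1 := mem_chainSupp.mp (hxsub (mem_chainSupp.mpr g1))
          rw [g1, h1]
          constructor
          · intro h; exact absurd h (by decide)
          · rintro ⟨-, h⟩; exact absurd rfl h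
      have hlt : (chainSupp G c').card < k := by
        rw [hsupp', ← hk]
        exact Finset.card_lt_card (Finset.sdiff_ssubset hxsub hxne)
      have hc'mem : c' ∈ cycleSpace G := (cycleSpace G).add_mem hc hxcs
      obtain ⟨S', hsum, hprop, hdisj⟩ := ih _ hlt c' rfl hc'mem
      have hxnotS' : x ∉ S' := by
        intro hxS'
        obtain ⟨e, he⟩ := hxne
        have := (hprop x hxS').2.1 he
        rw [hsupp', Finset.mem_sdiff] at this
        exact this.2 he
      refine ⟨insert x S', ?_, ?_, ?_⟩
      · rw [Finset.sum_insert hxnotS', hsum]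
        funext e
        have key : ∀ a b : ZMod 2, a + (b + a) = b := by decide
        exact key _ _
      · intro y hy
        rcases Finset.mem_insert.mp hy with rfl | hy'
        · exact ⟨hxel, hxsub, hxne⟩
        · refine ⟨(hprop y hy').1, ?_, (hprop y hy').2.2⟩
          refine (hprop y hy').2.1.trans ?_
          rw [hsupp']
          exact Finset.sdiff_subset
      · have hdisx : ∀ y ∈ S', Disjoint (chainSupp G x) (chainSupp G y) := by
          intro y hy
          rw [Finset.disjoint_left]
          intro e hex hey
          have := (hprop y hy).2.1 hey
          rw [hsupp', Finset.mem_sdiff] at this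
          exact this.2 hex
        intro a ha b hb hab
        rcases Finset.mem_insert.mp ha with rfl | ha' <;>
          rcases Finset.mem_insert.mp hb with rfl | hb'
        · exact absurd rfl hab
        · exact hdisx b hb'
        · exact (hdisx a ha').symm
        · exact hdisj a ha' b hb' hab



lemma cycleWeight_mono (G : SimpleGraph V) (w : Sym2 V → ℝ) (hw : ∀ e, 0 ≤ w e)
    {x c : G.edgeSet → ZMod 2} (h : chainSupp G x ⊆ chainSupp G c) :
    cycleWeight G w x ≤ cycleWeight G w c := by
  apply Finset.sum_le_sum
  intro e _
  by_cases hx : x e = 1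
  · have hce : c e = 1 := mem_chainSupp.mp (h (mem_chainSupp.mpr hx))
    rw [if_pos hx, if_pos hce]
  · rw [if_neg hx]
    split
    · exact hw _
    · exact le_refl _

/-- With non-negative edge weights there always exists a minimum cycle basis all of whose
elements are elementary cycles. -/
theorem exists_min_cycle_basis_elementary (G : SimpleGraph V) (hG : G.Connected)
    (w : Sym2 V → ℝ) (hw : ∀ e, 0 ≤ w e) :
    ∃ B : Finset (G.edgeSet → ZMod 2), IsMinCycleBasis G w B ∧
      ∀ c ∈ B, IsElementaryCycle G c := by
  classical
  haveI : FiniteDimensional (ZMod 2) (G.edgeSet → ZMod 2) := by infer_instance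
  -- existence of a cycle basis
  obtain ⟨b, hbsub, hbspan, hbind⟩ :=
    exists_linearIndependent (ZMod 2) ((cycleSpace G : Set (G.edgeSet → ZMod 2)))
  have hbfin : b.Finite := Set.toFinite b
  have hB0 : IsCycleBasis G hbfin.toFinset := by
    constructor
    · have hcoe : (hbfin.toFinset : Set (G.edgeSet → ZMod 2)) = b := hbfin.coe_toFinset
      rw [hcoe]
      exact hbind
    · rw [hbfin.coe_toFinset, hbspan, Submodule.span_eq]
  -- a minimum weight cycle basis
  set CB : Finset (Finset (G.edgeSet → ZMod 2)) :=
    Finset.univ.filter (fun B => IsCycleBasis G B) with hCB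
  have hCBne : CB.Nonempty := ⟨hbfin.toFinset, Finset.mem_filter.mpr ⟨Finset.mem_univ _, hB0⟩⟩
  obtain ⟨B1, hB1mem, hB1min⟩ := Finset.exists_min_image CB (setWeight G w) hCBne
  have hB1 : IsMinCycleBasis G w B1 :=
    ⟨(Finset.mem_filter.mp hB1mem).2, fun B' hB' => hB1min B' (Finset.mem_filter.mpr ⟨Finset.mem_univ _, hB'⟩)⟩
  -- among minimum cycle bases, minimize total support size
  set MB : Finset (Finset (G.edgeSet → ZMod 2)) :=
    Finset.univ.filter (fun B => IsMinCycleBasis G w B) with hMB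
  obtain ⟨B, hBmem, hBmin⟩ := Finset.exists_min_image MB
    (fun B => ∑ b ∈ B, (chainSupp G b).card) ⟨B1, Finset.mem_filter.mpr ⟨Finset.mem_univ _, hB1⟩⟩
  have hBmcb : IsMinCycleBasis G w B := (Finset.mem_filter.mp hBmem).2
  refine ⟨B, hBmcb, ?_⟩
  by_contra hcon
  push_neg at hcon
  obtain ⟨c, hcB, hcnel⟩ := hcon
  obtain ⟨⟨hind, hspan⟩, hmin⟩ := hBmcb
  -- c is a nonzero element of the cycle space
  have hcmem : c ∈ cycleSpace G := hspan ▸ Submodule.subset_span (Finset.mem_coe.mpr hcB)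
  have hc0 : c ≠ 0 := hind.ne_zero ⟨c, Finset.mem_coe.mpr hcB⟩
  -- decompose c into edge-disjoint elementary cycles
  obtain ⟨S, hsum, hprop, hdisj⟩ := decomp G ((chainSupp G c).card) c rfl hcmem
  have hSne : S.Nonempty := by
    rcases Finset.eq_empty_or_nonempty S with rfl | h
    · rw [Finset.sum_empty] at hsum; exact absurd hsum.symm hc0
    · exact h
  have hScard : 2 ≤ S.card := by
    by_contra h
    have h1 : S.card = 1 := by
      have := Finset.card_pos.mpr hSne
      omega
    obtain ⟨x, rfl⟩ := Finset.card_eq_one.mp h1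
    rw [Finset.sum_singleton] at hsum
    exact hcnel (hsum ▸ (hprop x (Finset.mem_singleton_self x)).1)
  -- linear independence facts
  have herase_ind : LinearIndependent (ZMod 2)
      (fun v : ((B.erase c : Finset (G.edgeSet → ZMod 2)) : Set (G.edgeSet → ZMod 2)) =>
        (v : G.edgeSet → ZMod 2)) :=
    LinearIndepOn.mono (R := ZMod 2) (v := id) (s := (B : Set (G.edgeSet → ZMod 2))) hind (Finset.coe_subset.mpr (Finset.erase_subset _ _))
  have hcnotspan : c ∉ Submodule.span (ZMod 2)
      ((B.erase c : Finset (G.edgeSet → ZMod 2)) : Set (G.edgeSet → ZMod 2)) := by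
    intro hmem
    have hBsub : ∀ a ∈ (B : Set (G.edgeSet → ZMod 2)),
        a ∈ Submodule.span (ZMod 2) ((B.erase c : Finset (G.edgeSet → ZMod 2)) : Set _) := by
      intro a ha
      rcases eq_or_ne a c with rfl | hac
      · exact hmem
      · exact Submodule.subset_span
          (Finset.mem_coe.mpr (Finset.mem_erase.mpr ⟨hac, Finset.mem_coe.mp ha⟩))
    have hspaneq : Submodule.span (ZMod 2) ((B.erase c : Finset (G.edgeSet → ZMod 2)) : Set _) =
        Submodule.span (ZMod 2) (B : Set (G.edgeSet → ZMod 2)) :=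
      le_antisymm (Submodule.span_mono (Finset.coe_subset.mpr (Finset.erase_subset _ _)))
        (Submodule.span_le.mpr hBsub)
    have h1 := finrank_span_finset_eq_card (R := ZMod 2) herase_ind
    have h2 := finrank_span_finset_eq_card (R := ZMod 2) hind
    rw [hspaneq, h2] at h1
    have h3 := Finset.card_erase_of_mem hcB
    have hpos : 0 < B.card := Finset.card_pos.mpr ⟨c, hcB⟩
    omega
  -- pick a decomposition cycle outside the span of the rest of the basis
  have hxex : ∃ x ∈ S, x ∉ Submodule.span (ZMod 2)
      ((B.erase c : Finset (G.edgeSet → ZMod 2)) : Set (G.edgeSet → ZMod 2)) := by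
    by_contra h
    push_neg at h
    have hss : (∑ x ∈ S, x) ∈ Submodule.span (ZMod 2)
        ((B.erase c : Finset (G.edgeSet → ZMod 2)) : Set (G.edgeSet → ZMod 2)) :=
      Submodule.sum_mem _ (fun x hx => h x hx)
    rw [hsum] at hss
    exact hcnotspan hss
  obtain ⟨x, hxS, hxnot⟩ := hxex
  obtain ⟨hxel, hxsub, hxne⟩ := hprop x hxS
  -- the support of x is strictly smaller than that of c
  obtain ⟨y, hyS, hyx⟩ := Finset.exists_mem_ne hScard x
  obtain ⟨ey, hey⟩ := (hprop y hyS).2.2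
  have heyC : ey ∈ chainSupp G c := (hprop y hyS).2.1 hey
  have heyx : ey ∉ chainSupp G x :=
    Finset.disjoint_left.mp (hdisj y hyS x hxS hyx) hey
  have hssub : chainSupp G x ⊂ chainSupp G c := ⟨hxsub, fun h => heyx (h heyC)⟩
  -- exchange c for x in B
  have hxnotmem : x ∉ B.erase c :=
    fun h => hxnot (Submodule.subset_span (Finset.mem_coe.mpr h))
  have hxnec : x ≠ c := fun h => hcnel (h ▸ hxel)
  set B' : Finset (G.edgeSet → ZMod 2) := insert x (B.erase c) with hB'
  have hindB' : LinearIndependent (ZMod 2)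
      (fun v : (B' : Set (G.edgeSet → ZMod 2)) => (v : G.edgeSet → ZMod 2)) := by
    rw [hB', Finset.coe_insert]
    exact LinearIndepOn.id_insert (s := ((B.erase c : Finset (G.edgeSet → ZMod 2)) : Set (G.edgeSet → ZMod 2))) herase_ind hxnot
  have hpos : 0 < B.card := Finset.card_pos.mpr ⟨c, hcB⟩
  have hcardB' : B'.card = B.card := by
    rw [hB', Finset.card_insert_of_notMem hxnotmem, Finset.card_erase_of_mem hcB]
    omega
  have hsubspace : (B' : Set (G.edgeSet → ZMod 2)) ⊆
      (cycleSpace G : Set (G.edgeSet → ZMod 2)) := by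
    intro a ha
    rw [hB', Finset.coe_insert] at ha
    rcases Set.mem_insert_iff.mp ha with rfl | ha'
    · exact elem_mem_cycleSpace hxel
    · exact hspan ▸ Submodule.subset_span
        (Finset.coe_subset.mpr (Finset.erase_subset _ _) ha')
  have hspanB' : Submodule.span (ZMod 2) (B' : Set (G.edgeSet → ZMod 2)) = cycleSpace G := by
    apply Submodule.eq_of_le_of_finrank_le (Submodule.span_le.mpr hsubspace)
    have h1 := finrank_span_finset_eq_card (R := ZMod 2) hindB'
    have h2 := finrank_span_finset_eq_card (R := ZMod 2) hind
    rw [h1, hcardB', ← hspan, h2]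
  have hB'basis : IsCycleBasis G B' := ⟨hindB', hspanB'⟩
  -- weight comparison
  have hwle : setWeight G w B' ≤ setWeight G w B := by
    have hsum1 : setWeight G w B' = cycleWeight G w x + setWeight G w (B.erase c) := by
      simp only [setWeight, hB']
      exact Finset.sum_insert hxnotmem
    have hsum2 : setWeight G w B = cycleWeight G w c + setWeight G w (B.erase c) := by
      simp only [setWeight]
      exact (Finset.add_sum_erase B _ hcB).symm
    rw [hsum1, hsum2]
    exact add_le_add_left (cycleWeight_mono G w hw hxsub) _
  have hB'min : IsMinCycleBasis G w B' :=
    ⟨hB'basis, fun B'' hB'' => le_trans hwle (hmin B'' hB'')⟩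
  -- total support size strictly decreases: contradiction
  have hmeas : ∑ b ∈ B', (chainSupp G b).card < ∑ b ∈ B, (chainSupp G b).card := by
    rw [hB', Finset.sum_insert hxnotmem]
    have h2 : ∑ b ∈ B, (chainSupp G b).card =
        (chainSupp G c).card + ∑ b ∈ B.erase c, (chainSupp G b).card :=
      (Finset.add_sum_erase B _ hcB).symm
    rw [h2]
    have := Finset.card_lt_card hssub
    omega
  have := hBmin B' (Finset.mem_filter.mpr ⟨Finset.mem_univ _, hB'min⟩)
  omega


end PaperMCB
end
end

section
/- Let K be a connected simplicial complex with non-negative edge weights, and let M = {B₁, …, B_q, C₁, …, C_p} be a minimum cycle basis of the 1-skeleton K₁, where B₁, …, B_q are the null-homologous elements and C₁, …, C_p are the non-bounding elements, each list sorted in non-decreasing order of weight. Then there exists a minimum homology basis {ζ₁, …, ζ_g} of K, indexed in non-decreasing order of weight, such that ζ₁ is homologous to C₁. -/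
open scoped Classical

noncomputable section

namespace PaperMCB

variable {V : Type*} [Fintype V] [DecidableEq V]

/-- A (2-dimensional) simplicial complex, presented by its 1-skeleton `G`
together with its set of triangular 2-simplices. -/
structure SComplex (V : Type*) [Fintype V] [DecidableEq V] where
  G : SimpleGraph V
  faces : Finset (Finset V)
  card_faces : ∀ f ∈ faces, f.card = 3
  adj_of_faces : ∀ f ∈ faces, ∀ x ∈ f, ∀ y ∈ f, x ≠ y → G.Adj x y

/-- The boundary of a 2-simplex: the `ℤ₂` incidence vector of its three edges. -/
def faceChain (K : SComplex V) (f : Finset V) : K.G.edgeSet → ZMod 2 :=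
  fun e => if ∀ x ∈ (e : Sym2 V), x ∈ f then 1 else 0

/-- The boundary space `B₁(K) = im ∂₂`: the span of the boundaries of the 2-simplices. -/
def boundarySpace (K : SComplex V) : Submodule (ZMod 2) (K.G.edgeSet → ZMod 2) :=
  Submodule.span (ZMod 2) (faceChain K '' (K.faces : Set (Finset V)))

/-- Two chains are homologous if their `ℤ₂`-difference is a boundary. -/
def Homologous (K : SComplex V) (z z' : K.G.edgeSet → ZMod 2) : Prop :=
  z - z' ∈ boundarySpace K

/-- The first homology group `H₁(K) = Z₁(K)/B₁(K)`, realized as the image of the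
cycle space in the quotient by the boundary space. -/
def homologySpace (K : SComplex V) :
    Submodule (ZMod 2) ((K.G.edgeSet → ZMod 2) ⧸ boundarySpace K) :=
  (cycleSpace K.G).map (boundarySpace K).mkQ

/-- A homology basis: a set of 1-cycles whose homology classes form a basis of `H₁(K)`. -/
def IsHomologyBasis (K : SComplex V) (H : Finset (K.G.edgeSet → ZMod 2)) : Prop :=
  (∀ z ∈ H, z ∈ cycleSpace K.G) ∧
  LinearIndependent (ZMod 2)
    (fun z : (H : Set (K.G.edgeSet → ZMod 2)) => (boundarySpace K).mkQ (z : K.G.edgeSet → ZMod 2)) ∧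
  Submodule.span (ZMod 2)
      ((boundarySpace K).mkQ '' (H : Set (K.G.edgeSet → ZMod 2))) = homologySpace K

/-- A minimum homology basis is a homology basis of minimum total weight. -/
def IsMinHomologyBasis (K : SComplex V) (w : Sym2 V → ℝ)
    (H : Finset (K.G.edgeSet → ZMod 2)) : Prop :=
  IsHomologyBasis K H ∧
  ∀ H' : Finset (K.G.edgeSet → ZMod 2), IsHomologyBasis K H' →
    setWeight K.G w H ≤ setWeight K.G w H'


section Aux

variable {K : Type*} [Field K] {M : Type*} [AddCommGroup M] [Module K M]

lemma aux_exists_not_mem_span_diff {s : Set M}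
    (hs : LinearIndependent K (fun x => x : s → M))
    {z : M} (hz : z ∈ Submodule.span K s) (P : Submodule K M) (hzP : z ∉ P) :
    ∃ x ∈ s, x ∉ P ∧ z ∉ Submodule.span K (s \ {x}) := by
  obtain ⟨c, hcs, hsum⟩ := Submodule.mem_span_set.mp hz
  have hex : ∃ x ∈ c.support, x ∉ P := by
    by_contra h
    push_neg at h
    refine hzP ?_
    rw [← hsum, Finsupp.sum]
    exact Submodule.sum_mem _ fun m hm => Submodule.smul_mem _ _ (h m hm)
  obtain ⟨x, hxsup, hxP⟩ := hex
  refine ⟨x, hcs hxsup, hxP, fun hmem => ?_⟩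
  obtain ⟨c', hcs', hsum'⟩ := Submodule.mem_span_set.mp hmem
  have hco : c - c' = 0 := by
    apply (linearIndepOn_iff (v := id)).mp hs
    · rw [Finsupp.mem_supported]
      refine subset_trans (Finset.coe_subset.mpr (Finsupp.support_sub)) ?_
      rw [Finset.coe_union]
      exact Set.union_subset hcs (subset_trans hcs' Set.diff_subset)
    · rw [map_sub]
      rw [Finsupp.linearCombination_apply, Finsupp.linearCombination_apply]
      simp only [id]
      rw [hsum, hsum', sub_self]
  have hx0 : c x ≠ 0 := Finsupp.mem_support_iff.mp hxsup
  have hcx' : c' x = 0 := by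
    by_contra h
    exact (hcs' (Finsupp.mem_support_iff.mpr h)).2 rfl
  have := congrFun (congrArg (fun f => f.toFun) hco) x
  have h2 : (c - c') x = 0 := by rw [hco]; rfl
  rw [Finsupp.sub_apply, hcx', sub_zero] at h2
  exact hx0 h2

lemma aux_exchange {s : Set M} (hs : LinearIndependent K (fun x => x : s → M))
    {x z : M} (hx : x ∈ s) (hzs : z ∈ Submodule.span K s)
    (hz : z ∉ Submodule.span K (s \ {x})) :
    LinearIndependent K (fun y => y : ↥(insert z (s \ {x})) → M) ∧
    Submodule.span K (insert z (s \ {x})) = Submodule.span K s := by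
  constructor
  · exact LinearIndepOn.id_insert (LinearIndepOn.mono hs Set.diff_subset) hz
  · apply le_antisymm
    · rw [Submodule.span_le]
      rintro y (rfl | hy)
      · exact hzs
      · exact Submodule.subset_span (Set.diff_subset hy)
    · rw [Submodule.span_le]
      intro y hy
      rcases eq_or_ne y x with rfl | hne
      · have hzins : z ∈ Submodule.span K (insert y (s \ {y})) := by
          rwa [Set.insert_diff_singleton, Set.insert_eq_of_mem hx]
        exact mem_span_insert_exchange hzins hz
      · exact Submodule.subset_span (Set.mem_insert_of_mem _ ⟨hy, hne⟩)

lemma exists_sorted_list (f : M → ℝ) (s : Finset M) :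
    ∃ l : List M, l.Nodup ∧ (∀ a, a ∈ l ↔ a ∈ s) ∧
      l.Pairwise (fun a b => f a ≤ f b) := by
  induction s using Finset.strongInduction with
  | _ s ih =>
    rcases s.eq_empty_or_nonempty with rfl | hne
    · exact ⟨[], List.nodup_nil, by simp, List.Pairwise.nil⟩
    · obtain ⟨m, hm, hmin⟩ := s.exists_min_image f hne
      obtain ⟨l, hnd, hmem, hsort⟩ := ih (s.erase m) (Finset.erase_ssubset hm)
      refine ⟨m :: l, ?_, ?_, ?_⟩
      · refine List.nodup_cons.mpr ⟨fun h => ?_, hnd⟩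
        exact (Finset.notMem_erase m s) ((hmem m).mp h)
      · intro a
        simp only [List.mem_cons, hmem, Finset.mem_erase]
        constructor
        · rintro (rfl | ⟨_, h⟩)
          · exact hm
          · exact h
        · intro h
          rcases eq_or_ne a m with rfl | hne'
          · exact Or.inl rfl
          · exact Or.inr ⟨hne', h⟩
      · refine List.pairwise_cons.mpr ⟨fun b hb => ?_, hsort⟩
        exact hmin b (Finset.mem_of_mem_erase ((hmem b).mp hb))

end Aux

lemma horton {G : SimpleGraph V} {w : Sym2 V → ℝ} {S : Finset (G.edgeSet → ZMod 2)}
    (hS : IsMinCycleBasis G w S) {x z : G.edgeSet → ZMod 2} (hx : x ∈ S)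
    (hz1 : z ∈ cycleSpace G)
    (hz2 : z ∉ Submodule.span (ZMod 2) ((S : Set (G.edgeSet → ZMod 2)) \ {x})) :
    cycleWeight G w x ≤ cycleWeight G w z := by
  obtain ⟨⟨hind, hspan⟩, hmin⟩ := hS
  have hzs : z ∈ Submodule.span (ZMod 2) (S : Set (G.edgeSet → ZMod 2)) := by
    rw [hspan]; exact hz1
  obtain ⟨hind', hspan'⟩ := aux_exchange hind (Finset.mem_coe.mpr hx) hzs hz2
  have hzne : z ∉ S.erase x := by
    intro h
    have h' : z ∈ ((S.erase x : Finset _) : Set _) := Finset.mem_coe.mpr h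
    rw [Finset.coe_erase] at h'
    exact hz2 (Submodule.subset_span h')
  have hcoe : ((insert z (S.erase x) : Finset _) : Set (G.edgeSet → ZMod 2))
      = insert z ((S : Set _) \ {x}) := by
    rw [Finset.coe_insert, Finset.coe_erase]
  have hbasis : IsCycleBasis G (insert z (S.erase x)) := by
    constructor
    · rw [hcoe]; exact hind'
    · rw [hcoe, hspan', hspan]
  have hle := hmin _ hbasis
  have h1 : setWeight G w (insert z (S.erase x))
      = cycleWeight G w z + setWeight G w (S.erase x) := Finset.sum_insert hzne
  have h2 : cycleWeight G w x + setWeight G w (S.erase x) = setWeight G w S :=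
    Finset.add_sum_erase S _ hx
  rw [h1] at hle
  linarith

lemma hom_basis_not_bd {K : SComplex V} {H : Finset (K.G.edgeSet → ZMod 2)}
    (hH : IsHomologyBasis K H) {ζ : K.G.edgeSet → ZMod 2} (hζ : ζ ∈ H) :
    ζ ∉ boundarySpace K := by
  intro h
  have h0 : (boundarySpace K).mkQ ζ = 0 := by
    rwa [Submodule.mkQ_apply, Submodule.Quotient.mk_eq_zero]
  exact hH.2.1.ne_zero (⟨ζ, Finset.mem_coe.mpr hζ⟩ : (H : Set _)) h0

lemma c0_le_nonbounding {K : SComplex V} {w : Sym2 V → ℝ}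
    {S : Finset (K.G.edgeSet → ZMod 2)}
    (hS : IsMinCycleBasis K.G w S) {c₀ : K.G.edgeSet → ZMod 2}
    (hc₀ : ∀ x ∈ S, x ∉ boundarySpace K → cycleWeight K.G w c₀ ≤ cycleWeight K.G w x)
    {ζ : K.G.edgeSet → ZMod 2} (hζZ : ζ ∈ cycleSpace K.G) (hζB : ζ ∉ boundarySpace K) :
    cycleWeight K.G w c₀ ≤ cycleWeight K.G w ζ := by
  have hζs : ζ ∈ Submodule.span (ZMod 2) (S : Set _) := by rw [hS.1.2]; exact hζZ
  obtain ⟨x, hxS, hxB, hxsp⟩ :=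
    aux_exists_not_mem_span_diff hS.1.1 hζs (boundarySpace K) hζB
  exact le_trans (hc₀ x (Finset.mem_coe.mp hxS) hxB)
    (horton hS (Finset.mem_coe.mp hxS) hζZ hxsp)

lemma exists_homology_basis (K : SComplex V) : ∃ H, IsHomologyBasis K H := by
  haveI : Finite (K.G.edgeSet → ZMod 2) := by infer_instance
  haveI : Finite ((K.G.edgeSet → ZMod 2) ⧸ boundarySpace K) := Quotient.finite _
  haveI : Module.Finite (ZMod 2) ↥(homologySpace K) :=
    Module.finite_iff_finite.mpr inferInstance
  set b := Module.finBasis (ZMod 2) ↥(homologySpace K) with hb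
  have hlift : ∀ i, ∃ z, z ∈ cycleSpace K.G ∧ (boundarySpace K).mkQ z = (b i : _) :=
    fun i => Submodule.mem_map.mp (b i).2
  choose lift hZ hmk using hlift
  have hmkinj : ∀ i j, (boundarySpace K).mkQ (lift i) = (boundarySpace K).mkQ (lift j) → i = j := by
    intro i j h
    rw [hmk, hmk] at h
    exact b.injective (Subtype.coe_injective h)
  set H := Finset.image lift Finset.univ with hH
  have hHcoe : (H : Set (K.G.edgeSet → ZMod 2)) = Set.range lift := by
    rw [hH, Finset.coe_image, Finset.coe_univ, Set.image_univ]
  have himg : (boundarySpace K).mkQ '' (H : Set _) =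
      Set.range (fun i => (boundarySpace K).mkQ (lift i)) := by
    rw [hHcoe, ← Set.range_comp]; rfl
  have hindfam : LinearIndependent (ZMod 2) (fun i => (boundarySpace K).mkQ (lift i)) := by
    have : (fun i => (boundarySpace K).mkQ (lift i))
        = (homologySpace K).subtype ∘ b := by
      funext i; simp [hmk]
    rw [this]
    exact b.linearIndependent.map' (homologySpace K).subtype
      (Submodule.ker_subtype _)
  have hInjOn : Set.InjOn (boundarySpace K).mkQ (H : Set _) := by
    intro a ha b' hb' hab
    rw [hHcoe] at ha hb'
    obtain ⟨i, rfl⟩ := ha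
    obtain ⟨j, rfl⟩ := hb'
    rw [hmkinj i j hab]
  refine ⟨H, ?_, ?_, ?_⟩
  · intro z hz
    obtain ⟨i, _, rfl⟩ := Finset.mem_image.mp hz
    exact hZ i
  · refine (linearIndepOn_iff_image hInjOn).mpr ?_
    rw [himg]
    exact hindfam.linearIndepOn_id
  · rw [himg]
    have heq : (fun i => (boundarySpace K).mkQ (lift i))
        = (homologySpace K).subtype ∘ b := funext fun i => by simp [hmk]
    rw [heq, Set.range_comp, Submodule.span_image, b.span_eq, Submodule.map_top,
      Submodule.range_subtype]

lemma exists_min_homology_basis (K : SComplex V) (w : Sym2 V → ℝ) :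
    ∃ H, IsMinHomologyBasis K w H := by
  obtain ⟨H₀, hH₀⟩ := exists_homology_basis K
  haveI : Finite (K.G.edgeSet → ZMod 2) := by infer_instance
  have hfin : {H : Finset (K.G.edgeSet → ZMod 2) | IsHomologyBasis K H}.Finite :=
    Set.toFinite _
  obtain ⟨H, hHmem, hmin⟩ := Finset.exists_min_image hfin.toFinset (setWeight K.G w)
    ⟨H₀, hfin.mem_toFinset.mpr hH₀⟩
  refine ⟨H, hfin.mem_toFinset.mp hHmem, fun H' hH' => hmin H' (hfin.mem_toFinset.mpr hH')⟩




set_option maxHeartbeats 1000000 in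
/-- Part 2 of Lemma 4: there exists a minimum homology basis whose first element is
homologous to the first non-bounding element of the minimum cycle basis. -/
theorem exists_min_hom_basis_first_homologous (K : SComplex V) (hK : K.G.Connected)
    (w : Sym2 V → ℝ) (hw : ∀ e, 0 ≤ w e)
    {q p : ℕ} (B : Fin q → (K.G.edgeSet → ZMod 2)) (C : Fin p → (K.G.edgeSet → ZMod 2))
    (hMinj : Function.Injective (Sum.elim B C))
    (hMmin : IsMinCycleBasis K.G w (Finset.image (Sum.elim B C) Finset.univ))
    (hBnull : ∀ j, B j ∈ boundarySpace K)
    (hCnon : ∀ i, C i ∉ boundarySpace K)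
    (hBsort : ∀ i j : Fin q, i ≤ j → cycleWeight K.G w (B i) ≤ cycleWeight K.G w (B j))
    (hCsort : ∀ i j : Fin p, i ≤ j → cycleWeight K.G w (C i) ≤ cycleWeight K.G w (C j))
    (hp : 0 < p) :
    ∃ (g : ℕ) (hg : 0 < g) (ζ : Fin g → (K.G.edgeSet → ZMod 2)),
      Function.Injective ζ ∧
      IsMinHomologyBasis K w (Finset.image ζ Finset.univ) ∧
      (∀ i j : Fin g, i ≤ j → cycleWeight K.G w (ζ i) ≤ cycleWeight K.G w (ζ j)) ∧
      Homologous K (ζ ⟨0, hg⟩) (C ⟨0, hp⟩) := by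
  set c₀ := C ⟨0, hp⟩ with hc₀def
  set S := Finset.image (Sum.elim B C) Finset.univ with hSdef
  have hc₀S : c₀ ∈ S := Finset.mem_image.mpr ⟨Sum.inr ⟨0, hp⟩, Finset.mem_univ _, rfl⟩
  have hc₀Z : c₀ ∈ cycleSpace K.G := by
    rw [← hMmin.1.2]; exact Submodule.subset_span (Finset.mem_coe.mpr hc₀S)
  have hc₀B : c₀ ∉ boundarySpace K := hCnon _
  have hc₀min : ∀ x ∈ S, x ∉ boundarySpace K →
      cycleWeight K.G w c₀ ≤ cycleWeight K.G w x := by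
    intro x hxS hxB
    obtain ⟨a, _, rfl⟩ := Finset.mem_image.mp hxS
    cases a with
    | inl j => exact absurd (hBnull j) hxB
    | inr i => exact hCsort ⟨0, hp⟩ i (Fin.mk_le_of_le_val (Nat.zero_le _))
  have hle : ∀ {ζ : K.G.edgeSet → ZMod 2}, ζ ∈ cycleSpace K.G → ζ ∉ boundarySpace K →
      cycleWeight K.G w c₀ ≤ cycleWeight K.G w ζ :=
    fun hζZ hζB => c0_le_nonbounding hMmin hc₀min hζZ hζB
  obtain ⟨Hm, hHm, hHmmin⟩ := exists_min_homology_basis K w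
  -- independence of the image set
  have hInjOn : Set.InjOn (boundarySpace K).mkQ (Hm : Set _) := by
    intro a ha b hb hab
    have h2 : (⟨a, ha⟩ : (Hm : Set (K.G.edgeSet → ZMod 2))) = ⟨b, hb⟩ :=
      hHm.2.1.injective hab
    exact congrArg Subtype.val h2
  have hindset := (linearIndepOn_iff_image hInjOn).mp hHm.2.1
  have hq0 : (boundarySpace K).mkQ c₀ ∉ (⊥ : Submodule (ZMod 2) _) := by
    simp only [Submodule.mem_bot]
    intro h
    rw [Submodule.mkQ_apply, Submodule.Quotient.mk_eq_zero] at h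
    exact hc₀B h
  have hq_mem : (boundarySpace K).mkQ c₀ ∈
      Submodule.span (ZMod 2) ((boundarySpace K).mkQ '' (Hm : Set _)) := by
    rw [hHm.2.2]
    exact Submodule.mem_map.mpr ⟨c₀, hc₀Z, rfl⟩
  obtain ⟨y, hyH, -, hynot⟩ := aux_exists_not_mem_span_diff hindset hq_mem _ hq0
  obtain ⟨x, hxH, rfl⟩ := hyH
  have hxHm : x ∈ Hm := Finset.mem_coe.mp hxH
  have hdiff : ((boundarySpace K).mkQ '' (Hm : Set _)) \ {(boundarySpace K).mkQ x}
      = (boundarySpace K).mkQ '' ((Hm : Set _) \ {x}) := by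
    rw [← Set.image_singleton, ← Set.InjOn.image_diff_subset hInjOn
      (Set.singleton_subset_iff.mpr hxH)]
  have hynotI : (boundarySpace K).mkQ c₀ ∉ Submodule.span (ZMod 2)
      ((boundarySpace K).mkQ '' ((Hm : Set (K.G.edgeSet → ZMod 2)) \ {x})) := by
    rw [← hdiff]; exact hynot
  -- the exchanged basis
  set H' : Finset (K.G.edgeSet → ZMod 2) := insert c₀ (Hm.erase x) with hH'def
  have hc₀ne : c₀ ∉ Hm.erase x := by
    intro h
    refine hynotI (Submodule.subset_span ⟨c₀, ?_, rfl⟩)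
    have h' : c₀ ∈ ((Hm.erase x : Finset _) : Set _) := Finset.mem_coe.mpr h
    rwa [Finset.coe_erase] at h'
  have hH'coe : (H' : Set (K.G.edgeSet → ZMod 2)) = insert c₀ ((Hm : Set _) \ {x}) := by
    rw [hH'def, Finset.coe_insert, Finset.coe_erase]
  -- weights
  have hwx : cycleWeight K.G w c₀ ≤ cycleWeight K.G w x :=
    hle (hHm.1 x hxHm) (hom_basis_not_bd hHm hxHm)
  have hweight : setWeight K.G w H' ≤ setWeight K.G w Hm := by
    have h1 : setWeight K.G w H'
        = cycleWeight K.G w c₀ + setWeight K.G w (Hm.erase x) := Finset.sum_insert hc₀ne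
    have h2 : cycleWeight K.G w x + setWeight K.G w (Hm.erase x) = setWeight K.G w Hm :=
      Finset.add_sum_erase Hm _ hxHm
    linarith
  -- InjOn mkQ on H'
  have hInjOn' : Set.InjOn (boundarySpace K).mkQ (H' : Set _) := by
    rw [hH'coe]
    have key : ∀ b ∈ (Hm : Set (K.G.edgeSet → ZMod 2)) \ {x},
        (boundarySpace K).mkQ b ≠ (boundarySpace K).mkQ c₀ := by
      intro b hb heq
      exact hynotI (heq ▸ Submodule.subset_span (Set.mem_image_of_mem _ hb))
    rintro a (rfl | ha) b (rfl | hb) hab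
    · rfl
    · exact absurd hab.symm (key b hb)
    · exact absurd hab (key a ha)
    · exact hInjOn ha.1 hb.1 hab
  -- homology basis property of H'
  have hq_x_mem : (boundarySpace K).mkQ x ∈
      (boundarySpace K).mkQ '' (Hm : Set (K.G.edgeSet → ZMod 2)) :=
    Set.mem_image_of_mem _ hxH
  obtain ⟨hind', hspan'⟩ := aux_exchange hindset hq_x_mem hq_mem hynot
  have hset : insert ((boundarySpace K).mkQ c₀)
      (((boundarySpace K).mkQ '' (Hm : Set (K.G.edgeSet → ZMod 2)))
        \ {(boundarySpace K).mkQ x})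
      = (boundarySpace K).mkQ '' (H' : Set (K.G.edgeSet → ZMod 2)) := by
    rw [hH'coe, Set.image_insert_eq, hdiff]
  have hH'basis : IsHomologyBasis K H' := by
    refine ⟨?_, ?_, ?_⟩
    · intro z hz
      rcases Finset.mem_insert.mp hz with rfl | hz'
      · exact hc₀Z
      · exact hHm.1 z (Finset.mem_of_mem_erase hz')
    · refine (linearIndepOn_iff_image hInjOn').mpr ?_
      rw [← hset]
      exact hind'
    · rw [← hset, hspan', hHm.2.2]
  have hH'min : IsMinHomologyBasis K w H' :=
    ⟨hH'basis, fun H'' hH'' => le_trans hweight (hHmmin H'' hH'')⟩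
  have hlow : ∀ y ∈ H', cycleWeight K.G w c₀ ≤ cycleWeight K.G w y := by
    intro y hy
    rcases Finset.mem_insert.mp hy with rfl | hy'
    · exact le_refl _
    · have hyHm := Finset.mem_of_mem_erase hy'
      exact hle (hHm.1 y hyHm) (hom_basis_not_bd hHm hyHm)
  obtain ⟨l, hnd, hmeml, hsort⟩ := exists_sorted_list (cycleWeight K.G w) (Hm.erase x)
  set L : List (K.G.edgeSet → ZMod 2) := c₀ :: l with hLdef
  have hLnd : L.Nodup := List.nodup_cons.mpr ⟨fun h => hc₀ne ((hmeml c₀).mp h), hnd⟩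
  have hLsort : L.Pairwise (fun a b => cycleWeight K.G w a ≤ cycleWeight K.G w b) :=
    List.pairwise_cons.mpr
      ⟨fun b hb => hlow b (Finset.mem_insert_of_mem ((hmeml b).mp hb)), hsort⟩
  have hLmem : ∀ a, a ∈ L ↔ a ∈ H' := by
    intro a
    rw [hLdef, hH'def]
    simp only [List.mem_cons, hmeml, Finset.mem_insert]
  have hLpos : 0 < L.length := List.length_pos_iff.mpr (List.cons_ne_nil _ _)
  refine ⟨L.length, hLpos, fun i => L.get i, ?_, ?_, ?_, ?_⟩
  · exact List.nodup_iff_injective_get.mp hLnd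
  · have himage : Finset.image (fun i => L.get i) Finset.univ = H' := by
      ext a
      simp only [Finset.mem_image, Finset.mem_univ, true_and]
      rw [← hLmem a, List.mem_iff_get]
    rw [himage]
    exact hH'min
  · intro i j hij
    haveI : IsRefl (K.G.edgeSet → ZMod 2)
        (fun a b => cycleWeight K.G w a ≤ cycleWeight K.G w b) := ⟨fun a => le_refl _⟩
    exact hLsort.rel_get_of_le hij
  · show L.get ⟨0, hLpos⟩ - C ⟨0, hp⟩ ∈ boundarySpace K
    have h0 : L.get ⟨0, hLpos⟩ = C ⟨0, hp⟩ := rfl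
    rw [h0, sub_self]
    exact Submodule.zero_mem _


end PaperMCB
end
end

section
/- Let K be a connected simplicial complex with non-negative edge weights, and let M = {B₁, …, B_q, C₁, …, C_p} be a minimum cycle basis of the 1-skeleton K₁, where B₁, …, B_q are the null-homologous elements and C₁, …, C_p are the non-bounding elements, each list sorted in non-decreasing order of weight. Then there exist a minimum homology basis {ζ₁, …, ζ_g} of K indexed in non-decreasing order of weight and indices i₁ < i₂ < … < i_g with {C_{i₁}, …, C_{i_g}} ⊆ {C₁, …, C_p} such that for every k ∈ [1,g], C_{i_k} is homologous to a cycle in the span of ζ₁, …, ζ_k and w(C_{i_k}) = w(ζ_k); moreover i₁ = 1, and for k > 1, i_k is the smallest index such that C_{i_k} is not homologous to any cycle in the span of {C_{i₁}, …, C_{i_{k−1}}}. -/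
open scoped Classical

noncomputable section

namespace PaperMCB

variable {V : Type*} [Fintype V] [DecidableEq V]

open Set Submodule Function

set_option linter.unusedSectionVars false

section Helpers
variable {R : Type*} [Field R] {E : Type*} [AddCommGroup E] [Module R E]
variable {ι : Type*} [Fintype ι] [DecidableEq E]

theorem indep_of_not_mem_span_prev : ∀ {n : ℕ} (v : Fin n → E),
    (∀ k : Fin n, v k ∉ Submodule.span R (v '' {j | j < k})) → LinearIndependent R v
  | 0, v, _ => linearIndependent_empty_type
  | (n+1), v, h => by
    rw [← Fin.snoc_init_self v, linearIndependent_fin_snoc]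
    constructor
    · refine indep_of_not_mem_span_prev (Fin.init v) fun k hk => h k.castSucc ?_
      refine Submodule.span_mono ?_ hk
      rintro x ⟨j, hj, rfl⟩
      exact ⟨j.castSucc, by simpa [Fin.castSucc_lt_castSucc_iff] using hj, rfl⟩
    · have : Set.range (Fin.init v) = v '' {j | j < Fin.last n} := by
        ext x
        simp only [Set.mem_range, Set.mem_image, Set.mem_setOf_eq, Fin.init]
        constructor
        · rintro ⟨j, rfl⟩; exact ⟨j.castSucc, j.castSucc_lt_last, rfl⟩
        · rintro ⟨j, hj, rfl⟩
          have hjn : (j:ℕ) < n := by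
            have := Fin.lt_last_iff_ne_last.mp hj
            omega
          exact ⟨⟨j.val, hjn⟩, rfl⟩
      rw [this]; exact h (Fin.last n)

lemma coe_img (f : ι → E) :
    ((Finset.image f Finset.univ : Finset E) : Set E) = Set.range f := by simp

lemma indep_image_iff {f : ι → E} (hf : Injective f) :
    (LinearIndependent R fun x : ((Finset.image f Finset.univ : Finset E) : Set E) => (x : E)) ↔
      LinearIndependent R f := by
  rw [coe_img]; exact linearIndepOn_id_range_iff hf

lemma span_range_restrict_eq_top {Z : Submodule R E} (v : ι → E) (hv : ∀ i, v i ∈ Z)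
    (hsp : span R (range v) = Z) :
    span R (range (fun i => (⟨v i, hv i⟩ : Z))) = ⊤ := by
  apply Submodule.map_injective_of_injective Z.injective_subtype
  rw [Submodule.map_span, Submodule.map_top, Submodule.range_subtype, ← Set.range_comp]
  exact hsp
end Helpers

section Greedy
variable {R : Type*} [Field R] {Q : Type*} [AddCommGroup Q] [Module R Q]

noncomputable def greedy {p : ℕ} (R : Type*) [Field R] [Module R Q] (c : Fin p → Q) :
    ℕ → Finset (Fin p)
  | 0 => ∅
  | (n+1) =>
    if h : n < p then
      if c ⟨n, h⟩ ∈ span R (c '' (greedy R c n)) then greedy R c n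
      else insert ⟨n, h⟩ (greedy R c n)
    else greedy R c n

variable {p : ℕ} (c : Fin p → Q)

lemma greedy_succ (n : ℕ) : greedy R c (n+1) =
    (if h : n < p then
      if c ⟨n, h⟩ ∈ span R (c '' (greedy R c n)) then greedy R c n
      else insert ⟨n, h⟩ (greedy R c n)
    else greedy R c n) := rfl

lemma greedy_lt : ∀ n, ∀ j ∈ greedy R c n, (j : ℕ) < n := by
  intro n
  induction n with
  | zero => simp [greedy]
  | succ n ih =>
    intro j hj
    rw [greedy_succ] at hj
    split_ifs at hj with h1 h2
    · exact (ih j hj).trans (Nat.lt_succ_self n)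
    · rcases Finset.mem_insert.mp hj with rfl | hj
      · exact Nat.lt_succ_self n
      · exact (ih j hj).trans (Nat.lt_succ_self n)
    · exact (ih j hj).trans (Nat.lt_succ_self n)

lemma greedy_mono : ∀ {n m : ℕ}, n ≤ m → greedy R c n ⊆ greedy R c m := by
  intro n m h
  induction m with
  | zero => simpa [Nat.le_zero.mp h]
  | succ m ih =>
    rcases Nat.lt_or_ge n (m+1) with h' | h'
    · have hsub : greedy R c n ⊆ greedy R c m := ih (Nat.lt_succ_iff.mp h')
      refine hsub.trans ?_
      rw [greedy_succ]
      split_ifs with h1 h2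
      · exact Finset.Subset.refl _
      · exact Finset.subset_insert _ _
      · exact Finset.Subset.refl _
    · have : n = m + 1 := le_antisymm h h'
      subst this; exact Finset.Subset.refl _

lemma greedy_step_mem {n : ℕ} (hn : n < p) :
    c ⟨n, hn⟩ ∈ span R (c '' (greedy R c (n+1))) := by
  rw [greedy_succ, dif_pos hn]
  split_ifs with h2
  · exact h2
  · exact subset_span ⟨⟨n, hn⟩, by simp, rfl⟩

lemma greedy_stable {j : Fin p} : ∀ {m : ℕ}, (j : ℕ) + 1 ≤ m →
    (j ∈ greedy R c m ↔ j ∈ greedy R c ((j : ℕ) + 1)) := by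
  intro m
  induction m with
  | zero => omega
  | succ m ih =>
    intro h
    rcases Nat.lt_or_ge (j.val + 1) (m+1) with h' | h'
    · have hm : j.val + 1 ≤ m := Nat.lt_succ_iff.mp h'
      rw [← ih hm]
      constructor
      · intro hj
        rw [greedy_succ] at hj
        split_ifs at hj with h1 h2
        · exact hj
        · rcases Finset.mem_insert.mp hj with rfl | hj
          · simp only [Fin.val_mk] at hm; omega
          · exact hj
        · exact hj
      · intro hj; exact greedy_mono c (Nat.le_succ m) hj
    · have : j.val + 1 = m + 1 := le_antisymm h h'
      rw [this]

lemma greedy_filter {n : ℕ} (hnp : n ≤ p) :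
    greedy R c n = Finset.filter (fun j : Fin p => (j : ℕ) < n) (greedy R c p) := by
  ext j
  simp only [Finset.mem_filter]
  constructor
  · intro hj
    exact ⟨greedy_mono c hnp hj, greedy_lt c n j hj⟩
  · rintro ⟨hjS, hjn⟩
    have h1 : j ∈ greedy R c ((j:ℕ)+1) := (greedy_stable c (by omega)).mp hjS
    exact (greedy_stable c (by omega)).mpr h1

lemma greedy_sel_not_mem {j : Fin p} (hj : j ∈ greedy R c p) :
    c j ∉ span R (c '' (greedy R c (j : ℕ))) := by
  have h1 : j ∈ greedy R c ((j:ℕ)+1) := (greedy_stable c (by omega)).mp hj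
  intro hmem
  rcases j with ⟨jv, hjv⟩
  rw [greedy_succ, dif_pos hjv, if_pos hmem] at h1
  exact absurd (greedy_lt c jv _ h1) (lt_irrefl jv)

lemma greedy_not_sel {j : Fin p} (hj : j ∉ greedy R c p) :
    c j ∈ span R (c '' (greedy R c (j : ℕ))) := by
  by_contra hmem
  apply hj
  have : j ∈ greedy R c ((j:ℕ)+1) := by
    rcases j with ⟨jv, hjv⟩
    rw [greedy_succ, dif_pos hjv, if_neg hmem]
    exact Finset.mem_insert_self _ _
  exact (greedy_stable c (by omega)).mpr this
end Greedy

set_option maxHeartbeats 1000000 in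
theorem exchange (G : SimpleGraph V) (w : Sym2 V → ℝ) {ι : Type*} [Fintype ι]
    (M : ι → (G.edgeSet → ZMod 2)) (hinj : Function.Injective M)
    (hmin : IsMinCycleBasis G w (Finset.image M Finset.univ))
    (x : G.edgeSet → ZMod 2) (hx : x ∈ cycleSpace G)
    (r : ι → ZMod 2) (hr : x = ∑ i, r i • M i) (j0 : ι) (hj0 : r j0 ≠ 0) :
    cycleWeight G w (M j0) ≤ cycleWeight G w x := by
  classical
  have h1 : ∀ a : ZMod 2, a ≠ 0 → a = 1 := by decide
  have hMi : LinearIndependent (ZMod 2) M := (indep_image_iff hinj).mp hmin.1.1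
  have hMsp : span (ZMod 2) (range M) = cycleSpace G := by
    rw [← coe_img M]; exact hmin.1.2
  set M' := Function.update M j0 x with hM'def
  have hM'j0 : M' j0 = x := Function.update_self _ _ _
  have hM'ne : ∀ i, i ≠ j0 → M' i = M i := fun i hi => Function.update_of_ne hi _ _
  have hxne : ∀ b, b ≠ j0 → x ≠ M b := by
    intro b hb hxb
    have hz : ∑ i, (r i - if i = b then 1 else 0 : ZMod 2) • M i = 0 := by
      have : ∑ i, (r i - if i = b then 1 else 0 : ZMod 2) • M i
          = (∑ i, r i • M i) - ∑ i, (if i = b then (1:ZMod 2) else 0) • M i := by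
        rw [← Finset.sum_sub_distrib]
        exact Finset.sum_congr rfl fun i _ => by rw [sub_smul]
      rw [this, ← hr]
      have : ∑ i, (if i = b then (1:ZMod 2) else 0) • M i = M b := by
        simp [ite_smul]
      rw [this, hxb, sub_self]
    have := Fintype.linearIndependent_iff.mp hMi _ hz j0
    rw [if_neg (by exact fun h => hb (h ▸ rfl))] at this
    · exact hj0 (by rwa [sub_zero] at this)
  have hM'inj : Function.Injective M' := by
    intro a b hab
    by_cases ha : a = j0 <;> by_cases hb : b = j0
    · rw [ha, hb]
    · subst ha; rw [hM'j0, hM'ne b hb] at hab; exact absurd hab (hxne b hb)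
    · subst hb; rw [hM'j0, hM'ne a ha] at hab; exact absurd hab.symm (hxne a ha)
    · rw [hM'ne a ha, hM'ne b hb] at hab; exact hinj hab
  have hM'cy : ∀ i, M' i ∈ cycleSpace G := by
    intro i
    by_cases hi : i = j0
    · subst hi; rw [hM'j0]; exact hx
    · rw [hM'ne i hi]; exact hMsp ▸ subset_span (mem_range_self i)
  have hMj0span : M j0 ∈ span (ZMod 2) (range M') := by
    have hxx : M j0 = x - ∑ i ∈ Finset.univ.erase j0, r i • M i := by
      have h2 := hr
      rw [← Finset.add_sum_erase _ _ (Finset.mem_univ j0), h1 _ hj0, one_smul] at h2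
      rw [h2]; abel
    rw [hxx]
    refine sub_mem (subset_span ⟨j0, hM'j0⟩) (Submodule.sum_mem _ fun i hi =>
      Submodule.smul_mem _ _ (subset_span ⟨i, hM'ne i (Finset.ne_of_mem_erase hi)⟩))
  have hspan' : span (ZMod 2) (range M') = cycleSpace G := by
    refine le_antisymm (span_le.2 ?_) ?_
    · rintro _ ⟨i, rfl⟩; exact hM'cy i
    · rw [← hMsp]
      refine span_le.2 ?_
      rintro _ ⟨i, rfl⟩
      by_cases hi : i = j0
      · subst hi; exact hMj0span
      · exact subset_span ⟨i, hM'ne i hi⟩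
  have hvZ : LinearIndependent (ZMod 2)
      (fun i => (⟨M i, hMsp ▸ subset_span (mem_range_self i)⟩ : cycleSpace G)) :=
    LinearIndependent.of_comp (cycleSpace G).subtype hMi
  have bZ : Module.Basis ι (ZMod 2) (cycleSpace G) :=
    Module.Basis.mk hvZ (ge_of_eq (span_range_restrict_eq_top M _ hMsp))
  have card_eq : Fintype.card ι = Module.finrank (ZMod 2) (cycleSpace G) :=
    (Module.finrank_eq_card_basis bZ).symm
  have indepv' : LinearIndependent (ZMod 2) (fun i => (⟨M' i, hM'cy i⟩ : cycleSpace G)) :=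
    linearIndependent_of_top_le_span_of_card_eq_finrank
      (ge_of_eq (span_range_restrict_eq_top M' hM'cy hspan')) card_eq
  have hM'i : LinearIndependent (ZMod 2) M' :=
    indepv'.map' (cycleSpace G).subtype (Submodule.ker_subtype _)
  have hB' : IsCycleBasis G (Finset.image M' Finset.univ) :=
    ⟨(indep_image_iff hM'inj).mpr hM'i, by rw [coe_img]; exact hspan'⟩
  have hle := hmin.2 _ hB'
  have hsw : setWeight G w (Finset.image M Finset.univ) = ∑ i, cycleWeight G w (M i) :=
    Finset.sum_image fun a _ b _ h => hinj h
  have hsw' : setWeight G w (Finset.image M' Finset.univ) = ∑ i, cycleWeight G w (M' i) :=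
    Finset.sum_image fun a _ b _ h => hM'inj h
  rw [hsw, hsw'] at hle
  rw [← Finset.add_sum_erase _ (fun i => cycleWeight G w (M i)) (Finset.mem_univ j0),
      ← Finset.add_sum_erase _ (fun i => cycleWeight G w (M' i)) (Finset.mem_univ j0)] at hle
  have herase : ∑ i ∈ Finset.univ.erase j0, cycleWeight G w (M' i)
      = ∑ i ∈ Finset.univ.erase j0, cycleWeight G w (M i) :=
    Finset.sum_congr rfl fun i hi => by rw [hM'ne i (Finset.ne_of_mem_erase hi)]
  rw [herase, hM'j0] at hle
  linarith

set_option maxHeartbeats 1000000 in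
/-- Theorem 5: from a minimum cycle basis `M = {B₁,…,B_q, C₁,…,C_p}` one can extract,
greedily, indices `i₁ < … < i_g` and a minimum homology basis `ζ₁,…,ζ_g` such that each
`C_{i_k}` is homologous to a cycle spanned by `ζ₁,…,ζ_k` and has the same weight as `ζ_k`;
moreover `i₁ = 1` and `i_k` is the smallest index whose cycle is not homologous to any
cycle spanned by the previously chosen ones. -/
theorem min_cycle_basis_contains_min_homology_basis (K : SComplex V) (hK : K.G.Connected)
    (w : Sym2 V → ℝ) (hw : ∀ e, 0 ≤ w e)
    {q p : ℕ} (B : Fin q → (K.G.edgeSet → ZMod 2)) (C : Fin p → (K.G.edgeSet → ZMod 2))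
    (hMinj : Function.Injective (Sum.elim B C))
    (hMmin : IsMinCycleBasis K.G w (Finset.image (Sum.elim B C) Finset.univ))
    (hBnull : ∀ j, B j ∈ boundarySpace K)
    (hCnon : ∀ i, C i ∉ boundarySpace K)
    (hBsort : ∀ i j : Fin q, i ≤ j → cycleWeight K.G w (B i) ≤ cycleWeight K.G w (B j))
    (hCsort : ∀ i j : Fin p, i ≤ j → cycleWeight K.G w (C i) ≤ cycleWeight K.G w (C j))
 :
    ∃ (g : ℕ) (ζ : Fin g → (K.G.edgeSet → ZMod 2)) (idx : Fin g → Fin p),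
      Function.Injective ζ ∧
      IsMinHomologyBasis K w (Finset.image ζ Finset.univ) ∧
      (∀ i j : Fin g, i ≤ j → cycleWeight K.G w (ζ i) ≤ cycleWeight K.G w (ζ j)) ∧
      StrictMono idx ∧
      (∀ k : Fin g,
        (∃ z ∈ Submodule.span (ZMod 2) (ζ '' {j : Fin g | j ≤ k}),
          Homologous K (C (idx k)) z) ∧
        cycleWeight K.G w (C (idx k)) = cycleWeight K.G w (ζ k)) ∧
      (∀ hg : 0 < g, (idx ⟨0, hg⟩ : ℕ) = 0) ∧
      (∀ k : Fin g, 0 < (k : ℕ) →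
        IsLeast {i : Fin p |
            ¬ ∃ z ∈ Submodule.span (ZMod 2) (C '' (idx '' {j : Fin g | j < k})),
              Homologous K (C i) z}
          (idx k)) := by
  classical
  set π := (boundarySpace K).mkQ with hπdef
  set M : (Fin q ⊕ Fin p) → (K.G.edgeSet → ZMod 2) := Sum.elim B C with hMdef
  have hMi : LinearIndependent (ZMod 2) M := (indep_image_iff hMinj).mp hMmin.1.1
  have hMsp : Submodule.span (ZMod 2) (range M) = cycleSpace K.G := by
    rw [← coe_img M]; exact hMmin.1.2
  have hMZ : ∀ i, M i ∈ cycleSpace K.G := fun i => hMsp ▸ subset_span (mem_range_self i)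
  have hCZ : ∀ i, C i ∈ cycleSpace K.G := fun i => hMZ (Sum.inr i)
  have hπB : ∀ j, π (B j) = 0 := fun j => (Submodule.Quotient.mk_eq_zero _).mpr (hBnull j)
  -- homology translation
  have hom_iff : ∀ y z : (K.G.edgeSet → ZMod 2), Homologous K y z ↔ π y = π z := by
    intro y z
    have h0 : π (y - z) = 0 ↔ y - z ∈ boundarySpace K := Submodule.Quotient.mk_eq_zero _
    unfold Homologous
    rw [← h0, map_sub, sub_eq_zero]
  have key_iff : ∀ (y : K.G.edgeSet → ZMod 2) (s : Set (K.G.edgeSet → ZMod 2)),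
      (∃ z ∈ Submodule.span (ZMod 2) s, Homologous K y z) ↔
        π y ∈ Submodule.span (ZMod 2) (π '' s) := by
    intro y s
    rw [← Submodule.map_span]
    constructor
    · rintro ⟨z, hz, hyz⟩
      exact ⟨z, hz, ((hom_iff y z).mp hyz).symm⟩
    · rintro ⟨z, hz, hzy⟩
      exact ⟨z, hz, (hom_iff y z).mpr hzy.symm⟩
  set c : Fin p → ((K.G.edgeSet → ZMod 2) ⧸ boundarySpace K) := fun i => π (C i) with hcdef
  set S : Finset (Fin p) := greedy (ZMod 2) c p with hSdef
  refine ⟨S.card, fun k => C ((S.orderIsoOfFin rfl k : Fin p)),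
    fun k => (S.orderIsoOfFin rfl k : Fin p), ?_⟩
  set idx : Fin S.card → Fin p := fun k => (S.orderIsoOfFin rfl k : Fin p) with hidxdef
  set ζ : Fin S.card → (K.G.edgeSet → ZMod 2) := fun k => C (idx k) with hζdef
  have hidxmem : ∀ k, idx k ∈ S := fun k => (S.orderIsoOfFin rfl k).2
  have hidxmono : StrictMono idx := fun a b hab => (S.orderIsoOfFin rfl).strictMono hab
  have hrangeidx : range idx = ↑S := by
    ext i
    constructor
    · rintro ⟨k, rfl⟩; exact hidxmem k
    · intro hi
      obtain ⟨k, hk⟩ := (S.orderIsoOfFin rfl).surjective ⟨i, hi⟩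
      exact ⟨k, congrArg Subtype.val hk⟩
  have hidx_img : ∀ k, idx '' {j | j < k} = ↑(greedy (ZMod 2) c (idx k).val) := by
    intro k
    rw [greedy_filter c (idx k).isLt.le]
    ext i
    simp only [Set.mem_image, Set.mem_setOf_eq, Finset.coe_filter, Finset.mem_coe]
    constructor
    · rintro ⟨j, hj, rfl⟩
      exact ⟨hidxmem j, hidxmono hj⟩
    · rintro ⟨hiS, hilt⟩
      obtain ⟨j, hj⟩ := (S.orderIsoOfFin rfl).surjective ⟨i, hiS⟩
      have hji : idx j = i := congrArg Subtype.val hj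
      refine ⟨j, ?_, hji⟩
      have : idx j < idx k := by rw [hji]; exact hilt
      exact hidxmono.lt_iff_lt.mp this
  have hnotmem : ∀ k, c (idx k) ∉ Submodule.span (ZMod 2)
      (c '' ↑(greedy (ZMod 2) c (idx k).val)) :=
    fun k => greedy_sel_not_mem c (hidxmem k)
  have hindep : LinearIndependent (ZMod 2) (fun k => c (idx k)) := by
    refine indep_of_not_mem_span_prev _ fun k => ?_
    have himg : (fun j => c (idx j)) '' {j | j < k} = c '' (idx '' {j | j < k}) :=
      (Set.image_image c idx _).symm
    rw [himg, hidx_img k]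
    exact hnotmem k
  have hinjζ : Function.Injective ζ := by
    intro a b hab
    exact hindep.injective (by simp only [hζdef, hcdef] at hab ⊢; rw [hab])
  -- span of selected classes is the homology space
  have hspanS : Submodule.span (ZMod 2) (c '' ↑S) = homologySpace K := by
    have h1 : homologySpace K = Submodule.span (ZMod 2) (range (fun i => π (M i))) := by
      rw [homologySpace, ← hMsp, Submodule.map_span, ← Set.range_comp]
      rfl
    rw [h1]
    refine le_antisymm ?_ ?_
    · refine Submodule.span_le.2 ?_
      rintro _ ⟨i, hiS, rfl⟩
      exact subset_span ⟨Sum.inr i, rfl⟩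
    · refine Submodule.span_le.2 ?_
      rintro _ ⟨i, rfl⟩
      cases i with
      | inl j => simp only [hMdef, Sum.elim_inl]; rw [hπB j]; exact Submodule.zero_mem _
      | inr i =>
        have h2 : c i ∈ Submodule.span (ZMod 2) (c '' ↑(greedy (ZMod 2) c ((i : ℕ) + 1))) := by
          have := greedy_step_mem (R := ZMod 2) c i.isLt
          simpa using this
        refine Submodule.span_mono (Set.image_mono ?_) h2
        exact_mod_cast greedy_mono c i.isLt
  -- the lower-bound fact: everything below idx k is in the span of earlier selecteds
  have hlb : ∀ (k : Fin S.card) (i : Fin p), i < idx k →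
      c i ∈ Submodule.span (ZMod 2) (c '' ↑(greedy (ZMod 2) c (idx k).val)) := by
    intro k i hik
    by_cases hiS : i ∈ S
    · refine subset_span ⟨i, ?_, rfl⟩
      rw [greedy_filter c (idx k).isLt.le]
      exact Finset.mem_filter.mpr ⟨hiS, hik⟩
    · have h2 := greedy_not_sel c hiS
      exact Submodule.span_mono (Set.image_mono (by exact_mod_cast greedy_mono c hik.le)) h2
  -- basis of the cycle space indexed by the MCB
  have hvZ : LinearIndependent (ZMod 2)
      (fun i => (⟨M i, hMZ i⟩ : cycleSpace K.G)) :=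
    LinearIndependent.of_comp (cycleSpace K.G).subtype hMi
  set bZ : Module.Basis (Fin q ⊕ Fin p) (ZMod 2) (cycleSpace K.G) :=
    Module.Basis.mk hvZ (ge_of_eq (span_range_restrict_eq_top M hMZ hMsp)) with hbZ
  -- the key weight claim
  have hclaim : ∀ (k : Fin S.card) (x : K.G.edgeSet → ZMod 2), x ∈ cycleSpace K.G →
      π x ∉ Submodule.span (ZMod 2) (c '' ↑(greedy (ZMod 2) c (idx k).val)) →
      cycleWeight K.G w (C (idx k)) ≤ cycleWeight K.G w x := by
    intro k x hx hπx
    set r : (Fin q ⊕ Fin p) → ZMod 2 := fun i => bZ.repr ⟨x, hx⟩ i with hrdef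
    have hxsum : x = ∑ i, r i • M i := by
      have h1 := congrArg ((cycleSpace K.G).subtype) (bZ.sum_repr ⟨x, hx⟩)
      rw [map_sum] at h1
      have h2 : ∀ i : Fin q ⊕ Fin p,
          ((cycleSpace K.G).subtype) (bZ.repr ⟨x, hx⟩ i • bZ i) = r i • M i := by
        intro i
        rw [map_smul, hrdef]
        congr 1
        rw [hbZ, Module.Basis.mk_apply]
        rfl
      rw [Finset.sum_congr rfl fun i _ => h2 i] at h1
      exact h1.symm
    have hex : ∃ i : Fin p, r (Sum.inr i) ≠ 0 ∧
        c i ∉ Submodule.span (ZMod 2) (c '' ↑(greedy (ZMod 2) c (idx k).val)) := by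
      by_contra hno
      push_neg at hno
      apply hπx
      have hπx2 : π x = ∑ i : Fin p, r (Sum.inr i) • c i := by
        rw [hxsum, map_sum]
        have h3 : ∀ i, π (r i • M i) = r i • π (M i) := fun i => map_smul π _ _
        rw [Finset.sum_congr rfl fun i _ => h3 i, Fintype.sum_sum_type]
        have hzero : ∑ j : Fin q, r (Sum.inl j) • π (M (Sum.inl j)) = 0 := by
          refine Finset.sum_eq_zero fun j _ => ?_
          rw [show M (Sum.inl j) = B j from rfl, hπB j, smul_zero]
        rw [hzero, zero_add]
        rfl
      rw [hπx2]
      refine Submodule.sum_mem _ fun i _ => ?_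
      by_cases hri : r (Sum.inr i) = 0
      · rw [hri, zero_smul]; exact Submodule.zero_mem _
      · exact Submodule.smul_mem _ _ (hno i hri)
    obtain ⟨i, hri, hci⟩ := hex
    have hik : idx k ≤ i := by
      by_contra hlt
      push_neg at hlt
      exact hci (hlb k i hlt)
    calc cycleWeight K.G w (C (idx k)) ≤ cycleWeight K.G w (C i) := hCsort _ _ hik
      _ = cycleWeight K.G w (M (Sum.inr i)) := rfl
      _ ≤ cycleWeight K.G w x := exchange K.G w M hMinj hMmin x hx r hxsum (Sum.inr i) hri
  -- finrank of homology space
  have hfr : Module.finrank (ZMod 2) (homologySpace K) = S.card := by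
    refine le_antisymm ?_ ?_
    · rw [← hspanS]
      have himg : c '' ↑S = ↑(S.image c) := (Finset.coe_image).symm
      rw [himg]
      exact le_trans (finrank_span_finset_le_card (S.image c)) Finset.card_image_le
    · have hmem : ∀ k, c (idx k) ∈ homologySpace K := fun k => by
        rw [← hspanS]; exact subset_span ⟨idx k, hidxmem k, rfl⟩
      have hind2 : LinearIndependent (ZMod 2)
          (fun k => (⟨c (idx k), hmem k⟩ : homologySpace K)) :=
        LinearIndependent.of_comp (homologySpace K).subtype hindep
      simpa using hind2.fintype_card_le_finrank
  -- our candidate is a homology basis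
  have hζHB : IsHomologyBasis K (Finset.image ζ Finset.univ) := by
    refine ⟨?_, ?_, ?_⟩
    · intro z hz
      obtain ⟨k, _, rfl⟩ := Finset.mem_image.mp hz
      exact hCZ (idx k)
    · have hset : ((Finset.image ζ Finset.univ : Finset _) : Set _) = range ζ := coe_img ζ
      rw [hset]
      exact (linearIndependent_equiv (Equiv.ofInjective ζ hinjζ)).mp hindep
    · have hset : ((Finset.image ζ Finset.univ : Finset _) : Set _) = range ζ := coe_img ζ
      rw [hset]
      have h1 : ⇑((boundarySpace K).mkQ) '' range ζ = c '' ↑S := by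
        rw [← Set.range_comp]
        have h2 : ⇑((boundarySpace K).mkQ) ∘ ζ = fun k => c (idx k) := rfl
        rw [h2, show (fun k => c (idx k)) = c ∘ idx from rfl, Set.range_comp, hrangeidx]
      rw [h1, hspanS]
  -- every homology basis has the same cardinality
  have hcard : ∀ H' : Finset (K.G.edgeSet → ZMod 2), IsHomologyBasis K H' →
      H'.card = S.card := by
    intro H' hH'
    refine le_antisymm ?_ ?_
    · rw [← hfr]
      have hmem : ∀ z : {x // x ∈ H'}, π (z : K.G.edgeSet → ZMod 2) ∈ homologySpace K :=
        fun z => ⟨(z : K.G.edgeSet → ZMod 2), hH'.1 _ z.2, rfl⟩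
      have hind2 : LinearIndependent (ZMod 2)
          (fun z : {x // x ∈ H'} => (⟨π (z : K.G.edgeSet → ZMod 2), hmem z⟩ :
            homologySpace K)) :=
        LinearIndependent.of_comp (homologySpace K).subtype hH'.2.1
      simpa [Fintype.card_coe] using hind2.fintype_card_le_finrank
    · rw [← hfr, ← hH'.2.2]
      have himg : ⇑((boundarySpace K).mkQ) '' ↑H' = ↑(H'.image ((boundarySpace K).mkQ)) :=
        (Finset.coe_image).symm
      rw [himg]
      exact le_trans (finrank_span_finset_le_card _) Finset.card_image_le
  -- minimality of the candidate homology basis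
  have hminH : ∀ H' : Finset (K.G.edgeSet → ZMod 2), IsHomologyBasis K H' →
      setWeight K.G w (Finset.image ζ Finset.univ) ≤ setWeight K.G w H' := by
    intro H' hH'
    have hc' : H'.card = S.card := hcard H' hH'
    set eH : Fin S.card ≃ {x // x ∈ H'} := ((H'.equivFin).trans (finCongr hc')).symm with heH
    set f : Fin S.card → ℝ :=
      fun k => cycleWeight K.G w ((eH k : K.G.edgeSet → ZMod 2)) with hf
    set σ := Tuple.sort f with hσ
    set y : Fin S.card → (K.G.edgeSet → ZMod 2) :=
      fun k => (eH (σ k) : K.G.edgeSet → ZMod 2) with hy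
    have hymono : ∀ a b : Fin S.card, a ≤ b →
        cycleWeight K.G w (y a) ≤ cycleWeight K.G w (y b) := by
      intro a b hab
      exact Tuple.monotone_sort f hab
    have hyH' : ∀ k, y k ∈ H' := fun k => (eH (σ k)).2
    have hyZ : ∀ k, y k ∈ cycleSpace K.G := fun k => hH'.1 _ (hyH' k)
    have hyindep : LinearIndependent (ZMod 2) (fun k => π (y k)) :=
      (linearIndependent_equiv (Equiv.trans σ eH)).mpr hH'.2.1
    have hkey : ∀ k, cycleWeight K.G w (ζ k) ≤ cycleWeight K.G w (y k) := by
      intro k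
      have hWk : ∃ j : Fin S.card, j ≤ k ∧
          π (y j) ∉ Submodule.span (ZMod 2) (c '' ↑(greedy (ZMod 2) c (idx k).val)) := by
        by_contra hno
        push_neg at hno
        set Wk := Submodule.span (ZMod 2) (c '' ↑(greedy (ZMod 2) c (idx k).val)) with hWkdef
        have hfrW : Module.finrank (ZMod 2) Wk ≤ (k : ℕ) := by
          have h1 : c '' ↑(greedy (ZMod 2) c (idx k).val)
              = ↑(Finset.image (fun j => c (idx j)) (Finset.Iio k)) := by
            rw [Finset.coe_image, Finset.coe_Iio, ← hidx_img k, Set.image_image]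
            rfl
          rw [hWkdef, h1]
          refine le_trans (finrank_span_finset_le_card _)
            (le_trans Finset.card_image_le ?_)
          rw [Fin.card_Iio]
        set emb : Fin ((k : ℕ) + 1) → Fin S.card :=
          fun j => ⟨j, lt_of_le_of_lt (Nat.lt_succ_iff.mp j.isLt) k.isLt⟩ with hemb
        have hembinj : Function.Injective emb :=
          fun a b hab => Fin.ext (by simpa [hemb, Fin.ext_iff] using hab)
        have hind3 : LinearIndependent (ZMod 2) (fun j => π (y (emb j))) :=
          hyindep.comp emb hembinj
        have hmem3 : ∀ j, π (y (emb j)) ∈ Wk := fun j =>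
          hno (emb j) ((Fin.le_def).mpr (Nat.lt_succ_iff.mp j.isLt))
        have hind4 : LinearIndependent (ZMod 2)
            (fun j => (⟨π (y (emb j)), hmem3 j⟩ : Wk)) :=
          LinearIndependent.of_comp Wk.subtype hind3
        have hcard4 := hind4.fintype_card_le_finrank
        simp only [Fintype.card_fin] at hcard4
        omega
      obtain ⟨j, hjk, hjW⟩ := hWk
      calc cycleWeight K.G w (ζ k) = cycleWeight K.G w (C (idx k)) := rfl
        _ ≤ cycleWeight K.G w (y j) := hclaim k (y j) (hyZ j) hjW
        _ ≤ cycleWeight K.G w (y k) := hymono j k hjk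
    have hsum1 : setWeight K.G w (Finset.image ζ Finset.univ)
        = ∑ k, cycleWeight K.G w (ζ k) :=
      Finset.sum_image fun a _ b _ h => hinjζ h
    have hsum2 : setWeight K.G w H' = ∑ k, cycleWeight K.G w (y k) := by
      rw [setWeight, ← Finset.sum_coe_sort H']
      exact (Fintype.sum_equiv (Equiv.trans σ eH) _ _ fun k => rfl).symm
    rw [hsum1, hsum2]
    exact Finset.sum_le_sum fun k _ => hkey k
  -- assemble everything
  refine ⟨hinjζ, ⟨hζHB, hminH⟩, ?_, hidxmono, ?_, ?_, ?_⟩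
  · intro i j hij
    exact hCsort _ _ (hidxmono.monotone hij)
  · intro k
    refine ⟨⟨ζ k, subset_span ⟨k, le_refl k, rfl⟩, (hom_iff _ _).mpr rfl⟩, rfl⟩
  · intro hg
    have hp : 0 < p := (idx ⟨0, hg⟩).pos
    have h0S : (⟨0, hp⟩ : Fin p) ∈ S := by
      have h01 : (⟨0, hp⟩ : Fin p) ∈ greedy (ZMod 2) c 1 := by
        rw [greedy_succ, dif_pos hp, if_neg ?_]
        · exact Finset.mem_insert_self _ _
        · rw [show greedy (ZMod 2) c 0 = (∅ : Finset (Fin p)) from rfl]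
          simp only [Finset.coe_empty, Set.image_empty, Submodule.span_empty,
            Submodule.mem_bot]
          intro hc0
          exact hCnon _ ((Submodule.Quotient.mk_eq_zero _).mp hc0)
      exact greedy_mono c hp h01
    obtain ⟨k0, hk0⟩ := (S.orderIsoOfFin rfl).surjective ⟨⟨0, hp⟩, h0S⟩
    have h1 : idx ⟨0, hg⟩ ≤ idx k0 := hidxmono.monotone ((Fin.le_def).mpr (Nat.zero_le _))
    have h2 : idx k0 = ⟨0, hp⟩ := congrArg Subtype.val hk0
    rw [h2] at h1
    exact Nat.le_zero.mp h1
  · intro k _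
    have himg2 : ⇑π '' (C '' (idx '' {j | j < k})) = c '' (idx '' {j | j < k}) := by
      rw [Set.image_image]
    constructor
    · rw [Set.mem_setOf_eq, key_iff, himg2, hidx_img k]
      exact hnotmem k
    · intro i hi
      by_contra hC2
      push_neg at hC2
      apply hi
      rw [key_iff, himg2, hidx_img k]
      exact hlb k i hC2

end PaperMCB
end
end

section
/- Let K be a connected simplicial complex with non-negative edge weights, and let M = {B₁, …, B_q, C₁, …, C_p} be a minimum cycle basis of the 1-skeleton K₁, where B₁, …, B_q are the null-homologous elements and C₁, …, C_p are the non-bounding elements, each list sorted in non-decreasing order of weight. Define indices greedily: i₁ = 1, and for k > 1, let i_k be the smallest index such that C_{i_k} is not homologous to any cycle in the span of {C_{i₁}, …, C_{i_{k−1}}}. Then the set {C_{i₁}, …, C_{i_g}} constitutes a minimum homology basis of K. -/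
open scoped Classical

noncomputable section

namespace PaperMCB

variable {V : Type*} [Fintype V] [DecidableEq V]

section Aux
open Submodule Set

theorem countP_toList {α : Type*} (s : Finset α) (p : α → Prop) [DecidablePred p] :
    (s.toList.countP (fun x => decide (p x))) = (s.filter p).card := by
  have h := Multiset.coe_countP (p := p) s.toList
  rw [Finset.coe_toList] at h
  rw [← h, Multiset.countP_eq_card_filter]
  rfl

-- lemma 1: linear independence from not-mem-span-of-earlier
theorem li_of_notMem_span {K V : Type*} [DivisionRing K] [AddCommGroup V] [Module K V] :
    ∀ {n : ℕ} (v : Fin n → V),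
      (∀ i : Fin n, v i ∉ Submodule.span K (v '' {j | j < i})) → LinearIndependent K v := by
  intro n
  induction n with
  | zero => intro v _; exact linearIndependent_empty_type
  | succ n ih =>
    intro v hv
    rw [← Fin.snoc_init_self v]
    refine linearIndependent_fin_snoc.2 ⟨ih _ ?_, ?_⟩
    · intro i
      have hset : (Fin.init v) '' {j | j < i} = v '' {j : Fin (n+1) | j < Fin.castSucc i} := by
        ext x
        constructor
        · rintro ⟨j, hj, rfl⟩
          exact ⟨Fin.castSucc j, by simpa using hj, rfl⟩
        · rintro ⟨j, hj, rfl⟩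
          have hji : (j : ℕ) < (i : ℕ) := by simpa [Fin.lt_def] using hj
          have hjn : (j : ℕ) < n := lt_of_lt_of_le hji (by omega)
          refine ⟨⟨(j : ℕ), hjn⟩, ?_, ?_⟩
          · exact hji
          · exact congrArg v (Fin.ext rfl)
      rw [hset]
      have := hv (Fin.castSucc i)
      simpa [Fin.init] using this
    · have hset : Set.range (Fin.init v) = v '' {j : Fin (n+1) | j < Fin.last n} := by
        ext x
        constructor
        · rintro ⟨j, rfl⟩
          exact ⟨Fin.castSucc j, by simp [Fin.lt_def, Fin.castSucc_lt_last], rfl⟩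
        · rintro ⟨j, hj, rfl⟩
          have hjn : (j : ℕ) < n := by simpa [Fin.lt_def] using hj
          exact ⟨⟨j, hjn⟩, congrArg v (Fin.ext rfl)⟩
      rw [hset]
      exact hv (Fin.last n)

-- lemma 2
theorem mkQ_mem_span_image {R M : Type*} [Ring R] [AddCommGroup M] [Module R M]
    (p : Submodule R M) (S : Set M) (x : M) :
    p.mkQ x ∈ Submodule.span R (p.mkQ '' S) ↔ ∃ z ∈ Submodule.span R S, x - z ∈ p := by
  rw [Submodule.span_image, Submodule.mem_map]
  constructor
  · rintro ⟨z, hz, hzx⟩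
    refine ⟨z, hz, ?_⟩
    have : z - x ∈ p := by
      rw [Submodule.mkQ_apply, Submodule.mkQ_apply] at hzx
      exact (Submodule.Quotient.eq p).1 hzx
    simpa [neg_sub] using p.neg_mem this
  · rintro ⟨z, hz, hxz⟩
    refine ⟨z, hz, ?_⟩
    rw [Submodule.mkQ_apply, Submodule.mkQ_apply]
    exact (Submodule.Quotient.eq p).2 (by simpa [neg_sub] using p.neg_mem hxz)

-- lemma 3
theorem li_image {α R M : Type*} [Ring R] [AddCommGroup M] [Module R M] [DecidableEq α]
    {n : ℕ} {D : Fin n → α} (hD : Function.Injective D) {f : α → M}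
    (h : LinearIndependent R (fun k => f (D k))) :
    LinearIndependent R
      (fun x : ((Finset.image D Finset.univ : Finset α) : Set α) => f (x : α)) := by
  have hset : ((Finset.image D Finset.univ : Finset α) : Set α) = Set.range D := by simp
  rw [hset]
  have he : (fun x : Set.range D => f (x : α)) ∘ (Equiv.ofInjective D hD) =
      fun k => f (D k) := by
    funext k; simp
  exact (linearIndependent_equiv (Equiv.ofInjective D hD)).1 (he ▸ h)

end Aux

theorem zmod2_cases (x : ZMod 2) : x = 0 ∨ x = 1 := by revert x; decide

theorem mcb_support_le (G : SimpleGraph V) (w : Sym2 V → ℝ)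
    {ι : Type*} [Fintype ι] [DecidableEq ι] (m : ι → (G.edgeSet → ZMod 2))
    (hminj : Function.Injective m)
    (hmin : IsMinCycleBasis G w (Finset.image m Finset.univ))
    (hmli : LinearIndependent (ZMod 2) m)
    (hmspan : Submodule.span (ZMod 2) (Set.range m) = cycleSpace G)
    (z : G.edgeSet → ZMod 2) (hz : z ∈ cycleSpace G)
    (c : ι → ZMod 2) (hc : ∑ i, c i • m i = z)
    (s : ι) (hcs : c s ≠ 0) :
    cycleWeight G w (m s) ≤ cycleWeight G w z := by
  by_contra hlt
  push_neg at hlt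
  -- z is not equal to any m t
  have hzne : ∀ t, z ≠ m t := by
    intro t hzt
    have hP : ∃ P : ι → ZMod 2, P = Pi.single t 1 := ⟨_, rfl⟩
    obtain ⟨P, hPdef⟩ := hP
    have h1 : ∑ i, P i • m i = m t := by
      rw [Finset.sum_eq_single t]
      · rw [hPdef]; simp
      · intro b _ hb; rw [hPdef]; simp [Pi.single_apply, hb]
      · intro h; exact absurd (Finset.mem_univ t) h
    have hsum : ∑ i, (c i - P i) • m i = 0 := by
      simp only [sub_smul, Finset.sum_sub_distrib, hc, h1, hzt, sub_self]
    have hzero := Fintype.linearIndependent_iff.1 hmli (fun i => c i - P i) hsum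
    have hct : c = P := by
      funext i
      have := hzero i
      simpa [sub_eq_zero] using this
    have hst : s = t := by
      by_contra hne
      apply hcs
      rw [hct, hPdef, Pi.single_apply, if_neg hne]
    rw [hst, ← hzt] at hlt
    exact lt_irrefl _ hlt
  -- the updated family
  set m' : ι → (G.edgeSet → ZMod 2) := Function.update m s z with hm'
  have hm'inj : Function.Injective m' := by
    intro t t' h
    rw [hm', Function.update_apply, Function.update_apply] at h
    split_ifs at h with h1 h2 h2
    · rw [h1, h2]
    · exact absurd h (hzne t')
    · exact absurd h.symm (hzne t)
    · exact hminj h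
  have hcs1 : c s = 1 := (zmod2_cases (c s)).resolve_left hcs
  have hms : m s = z - ∑ i ∈ Finset.univ.erase s, c i • m i := by
    have h2 : z = c s • m s + ∑ i ∈ Finset.univ.erase s, c i • m i := by
      rw [← hc, ← Finset.add_sum_erase _ _ (Finset.mem_univ s)]
    rw [h2, hcs1, one_smul]
    abel
  have hspan' : Submodule.span (ZMod 2) (Set.range m') = cycleSpace G := by
    apply le_antisymm
    · rw [Submodule.span_le]
      rintro x ⟨t, rfl⟩
      rw [hm', Function.update_apply]
      split_ifs
      · exact hz
      · rw [← hmspan] at *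
        exact Submodule.subset_span (Set.mem_range_self t)
    · rw [← hmspan, Submodule.span_le]
      rintro x ⟨t, rfl⟩
      rcases eq_or_ne t s with rfl | ht
      · rw [hms]
        apply Submodule.sub_mem
        · exact Submodule.subset_span ⟨t, Function.update_self t z m⟩
        · apply Submodule.sum_mem
          intro i hi
          apply Submodule.smul_mem
          have hine : i ≠ t := (Finset.mem_erase.1 hi).1
          exact Submodule.subset_span ⟨i, Function.update_of_ne hine z m⟩
      · exact Submodule.subset_span ⟨t, Function.update_of_ne ht z m⟩
  have hm'li : LinearIndependent (ZMod 2) m' := by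
    rw [linearIndependent_iff_card_eq_finrank_span]
    show Fintype.card ι = Module.finrank (ZMod 2) (Submodule.span (ZMod 2) (Set.range m'))
    have heq : Submodule.span (ZMod 2) (Set.range m') = Submodule.span (ZMod 2) (Set.range m) := by
      rw [hspan', hmspan]
    rw [heq]
    exact (finrank_span_eq_card hmli).symm
  -- the new basis
  have hB'basis : IsCycleBasis G (Finset.image m' Finset.univ) := by
    have hset : ((Finset.image m' Finset.univ : Finset _) : Set (G.edgeSet → ZMod 2)) = Set.range m' := by
      simp
    constructor
    · rw [hset]
      exact (linearIndepOn_id_range_iff hm'inj).2 hm'li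
    · rw [hset]
      exact hspan'
  have hle := hmin.2 _ hB'basis
  have hwM : setWeight G w (Finset.image m Finset.univ) = ∑ t, cycleWeight G w (m t) :=
    Finset.sum_image (fun x _ y _ h => hminj h)
  have hwB' : setWeight G w (Finset.image m' Finset.univ) = ∑ t, cycleWeight G w (m' t) :=
    Finset.sum_image (fun x _ y _ h => hm'inj h)
  have hsum' : ∑ t, cycleWeight G w (m' t)
      = cycleWeight G w z + ∑ t ∈ Finset.univ.erase s, cycleWeight G w (m t) := by
    have hfun : (fun t => cycleWeight G w (m' t))
        = Function.update (fun t => cycleWeight G w (m t)) s (cycleWeight G w z) := by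
      funext t
      by_cases ht : t = s <;> simp [hm', Function.update_apply, ht]
    rw [hfun, Finset.sum_update_of_mem (Finset.mem_univ s), Finset.sdiff_singleton_eq_erase]
  have hsumM : ∑ t, cycleWeight G w (m t)
      = cycleWeight G w (m s) + ∑ t ∈ Finset.univ.erase s, cycleWeight G w (m t) :=
    (Finset.add_sum_erase _ _ (Finset.mem_univ s)).symm
  rw [hwM, hwB', hsum', hsumM] at hle
  linarith

/-- The greedily chosen non-bounding elements of a minimum cycle basis form a minimum
homology basis. -/
theorem greedy_subset_is_min_homology_basis (K : SComplex V) (hK : K.G.Connected)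
    (w : Sym2 V → ℝ) (hw : ∀ e, 0 ≤ w e)
    {q p : ℕ} (B : Fin q → (K.G.edgeSet → ZMod 2)) (C : Fin p → (K.G.edgeSet → ZMod 2))
    (hMinj : Function.Injective (Sum.elim B C))
    (hMmin : IsMinCycleBasis K.G w (Finset.image (Sum.elim B C) Finset.univ))
    (hBnull : ∀ j, B j ∈ boundarySpace K)
    (hCnon : ∀ i, C i ∉ boundarySpace K)
    (hBsort : ∀ i j : Fin q, i ≤ j → cycleWeight K.G w (B i) ≤ cycleWeight K.G w (B j))
    (hCsort : ∀ i j : Fin p, i ≤ j → cycleWeight K.G w (C i) ≤ cycleWeight K.G w (C j))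
    {g : ℕ} (hgdim : g = Module.finrank (ZMod 2) (homologySpace K))
    (idx : Fin g → Fin p)
    (h0 : ∀ hg : 0 < g, (idx ⟨0, hg⟩ : ℕ) = 0)
    (hgreedy : ∀ k : Fin g, 0 < (k : ℕ) →
      IsLeast {i : Fin p |
          ¬ ∃ z ∈ Submodule.span (ZMod 2) (C '' (idx '' {j : Fin g | j < k})),
            Homologous K (C i) z}
        (idx k)) :
    IsMinHomologyBasis K w (Finset.image (fun k => C (idx k)) Finset.univ) := by
  classical
  set π : (K.G.edgeSet → ZMod 2) →ₗ[ZMod 2] ((K.G.edgeSet → ZMod 2) ⧸ boundarySpace K) :=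
    (boundarySpace K).mkQ with hπdef
  set m : Fin q ⊕ Fin p → (K.G.edgeSet → ZMod 2) := Sum.elim B C with hmdef
  set cw : (K.G.edgeSet → ZMod 2) → ℝ := cycleWeight K.G w with hcwdef
  -- basic facts about the minimum cycle basis
  have hMcoe : ((Finset.image m Finset.univ : Finset _) : Set (K.G.edgeSet → ZMod 2))
      = Set.range m := by simp
  have hmli : LinearIndependent (ZMod 2) m := by
    have h := hMmin.1.1
    rw [hMcoe] at h
    exact (linearIndepOn_id_range_iff hMinj).1 h
  have hmspan : Submodule.span (ZMod 2) (Set.range m) = cycleSpace K.G := by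
    rw [← hMcoe]; exact hMmin.1.2
  have hCmem : ∀ i, C i ∈ cycleSpace K.G := by
    intro i
    rw [← hmspan]
    exact Submodule.subset_span ⟨Sum.inr i, rfl⟩
  have hπB : ∀ j, π (B j) = 0 := by
    intro j
    rw [hπdef]
    exact (Submodule.Quotient.mk_eq_zero _).2 (hBnull j)
  -- translation of the greedy hypotheses
  have htrans : ∀ (k : Fin g) (i : Fin p),
      (¬ ∃ z ∈ Submodule.span (ZMod 2) (C '' (idx '' {j : Fin g | j < k})),
        Homologous K (C i) z)
      ↔ π (C i) ∉ Submodule.span (ZMod 2) (π '' (C '' (idx '' {j : Fin g | j < k}))) := by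
    intro k i
    have h := mkQ_mem_span_image (boundarySpace K) (C '' (idx '' {j : Fin g | j < k})) (C i)
    constructor
    · intro hne hmem
      exact hne (by simpa [Homologous] using h.1 hmem)
    · intro hnm ⟨z, hz1, hz2⟩
      exact hnm (h.2 ⟨z, hz1, hz2⟩)
  have hnotin : ∀ k : Fin g,
      π (C (idx k)) ∉ Submodule.span (ZMod 2) (π '' (C '' (idx '' {j : Fin g | j < k}))) := by
    intro k
    rcases Nat.eq_zero_or_pos (k : ℕ) with hk | hk
    · have hempty : {j : Fin g | j < k} = (∅ : Set (Fin g)) := by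
        ext j
        simp only [Set.mem_setOf_eq, Set.mem_empty_iff_false, iff_false]
        intro hj
        have := Fin.lt_def.1 hj
        omega
      rw [hempty]
      simp only [Set.image_empty, Submodule.span_empty, Submodule.mem_bot]
      intro hzero
      exact hCnon (idx k) ((Submodule.Quotient.mk_eq_zero _).1 hzero)
    · exact (htrans k _).1 (hgreedy k hk).1
  have hleast : ∀ (k : Fin g) (i : Fin p),
      π (C i) ∉ Submodule.span (ZMod 2) (π '' (C '' (idx '' {j : Fin g | j < k}))) →
      idx k ≤ i := by
    intro k i hi
    rcases Nat.eq_zero_or_pos (k : ℕ) with hk | hk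
    · have hg0 : 0 < g := k.pos
      have hk0 : k = ⟨0, hg0⟩ := Fin.ext hk
      have := h0 hg0
      rw [hk0]
      exact Fin.le_def.2 (by omega)
    · exact (hgreedy k hk).2 ((htrans k i).2 hi)
  -- the chosen family
  set D : Fin g → (K.G.edgeSet → ZMod 2) := fun k => C (idx k) with hDdef
  have hWD : ∀ k : Fin g,
      (fun j => π (D j)) '' {j : Fin g | j < k} = π '' (C '' (idx '' {j : Fin g | j < k})) := by
    intro k
    rw [Set.image_image, Set.image_image]
  have hDli : LinearIndependent (ZMod 2) (fun k => π (D k)) := by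
    apply li_of_notMem_span
    intro k
    rw [hWD k]
    exact hnotin k
  have hDinj : Function.Injective D := by
    intro a b hab
    exact hDli.injective (by rw [hab] : π (D a) = π (D b))
  have hDmem : ∀ k, D k ∈ cycleSpace K.G := fun k => hCmem (idx k)
  -- the homology basis property
  have hHB : IsHomologyBasis K (Finset.image D Finset.univ) := by
    refine ⟨?_, ?_, ?_⟩
    · intro z hz
      rcases Finset.mem_image.1 hz with ⟨k, _, rfl⟩
      exact hDmem k
    · exact li_image hDinj hDli
    · have himg : π '' ((Finset.image D Finset.univ : Finset _) : Set _)
          = Set.range (fun k => π (D k)) := by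
        rw [Finset.coe_image, Finset.coe_univ, Set.image_univ, ← Set.range_comp]
        rfl
      rw [himg]
      apply Submodule.eq_of_le_of_finrank_le
      · rw [Submodule.span_le]
        rintro x ⟨k, rfl⟩
        exact Submodule.mem_map.2 ⟨D k, hDmem k, rfl⟩
      · rw [finrank_span_eq_card hDli, Fintype.card_fin, ← hgdim]
  refine ⟨hHB, ?_⟩
  intro H' hH'
  -- cardinality of H'
  have hrange : Set.range (fun z : (H' : Set (K.G.edgeSet → ZMod 2)) => π (z : K.G.edgeSet → ZMod 2))
      = π '' (H' : Set (K.G.edgeSet → ZMod 2)) := (Set.image_eq_range _ _).symm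
  have hcardH' : H'.card = g := by
    have h2 := finrank_span_eq_card hH'.2.1
    rw [hrange, hH'.2.2, ← hgdim] at h2
    rw [← Fintype.card_coe]
    exact h2.symm
  -- the counting claim
  have hcount : ∀ k : Fin g,
      (H'.filter (fun z => cw z < cw (D k))).card ≤ (k : ℕ) := by
    intro k
    by_contra hgt
    push_neg at hgt
    set T : Finset (K.G.edgeSet → ZMod 2) := H'.filter (fun z => cw z < cw (D k)) with hTdef
    have hTsub : T ⊆ H' := Finset.filter_subset _ _
    have hexists : ∃ z ∈ T, π z ∉ Submodule.span (ZMod 2)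
        (π '' (C '' (idx '' {j : Fin g | j < k}))) := by
      by_contra hall
      push_neg at hall
      set W : Submodule (ZMod 2) _ :=
        Submodule.span (ZMod 2) (π '' (C '' (idx '' {j : Fin g | j < k}))) with hWdef
      have hliT0 : LinearIndependent (ZMod 2)
          (fun z : (T : Set (K.G.edgeSet → ZMod 2)) => π (z : K.G.edgeSet → ZMod 2)) := by
        have hsub : (T : Set (K.G.edgeSet → ZMod 2)) ⊆ (H' : Set _) :=
          Finset.coe_subset.2 hTsub
        exact hH'.2.1.comp (Set.inclusion hsub) (Set.inclusion_injective hsub)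
      have hliT : LinearIndependent (ZMod 2)
          (fun z : (T : Set (K.G.edgeSet → ZMod 2)) =>
            (⟨π (z : K.G.edgeSet → ZMod 2), hall z z.2⟩ : W)) :=
        LinearIndependent.of_comp W.subtype hliT0
      have hcard_le : Fintype.card (T : Set (K.G.edgeSet → ZMod 2))
          ≤ Module.finrank (ZMod 2) W := hliT.fintype_card_le_finrank
      have hfr : Module.finrank (ZMod 2) W ≤ (k : ℕ) := by
        have hsetfin : π '' (C '' (idx '' {j : Fin g | j < k}))
            = ((Finset.image (fun j : Fin g => π (C (idx j)))
                (Finset.univ.filter (fun j : Fin g => j < k)) : Finset _) : Set _) := by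
          rw [Finset.coe_image, Finset.coe_filter, Set.image_image, Set.image_image]
          congr 1
          ext j
          simp
        rw [hWdef, hsetfin]
        refine le_trans (finrank_span_finset_le_card _) (le_trans Finset.card_image_le ?_)
        have : Finset.univ.filter (fun j : Fin g => j < k) = Finset.Iio k := by
          ext j; simp [Finset.mem_Iio]
        rw [this]
        exact le_of_eq (Fin.card_Iio k)
      have hTcard : Fintype.card (T : Set (K.G.edgeSet → ZMod 2)) = T.card := Fintype.card_coe T
      omega
    rcases hexists with ⟨z, hzT, hzW⟩
    have hzH' : z ∈ H' := hTsub hzT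
    have hzc : cw z < cw (D k) := (Finset.mem_filter.1 hzT).2
    have hzcyc : z ∈ cycleSpace K.G := hH'.1 z hzH'
    obtain ⟨c, hc⟩ : ∃ c : Fin q ⊕ Fin p → ZMod 2, ∑ i, c i • m i = z :=
      (Submodule.mem_span_range_iff_exists_fun _).1 (by rw [hmspan]; exact hzcyc)
    have hπz : π z = ∑ i : Fin p, c (Sum.inr i) • π (C i) := by
      rw [← hc, map_sum]
      rw [Fintype.sum_sum_type]
      have hzero : ∀ j : Fin q, π (c (Sum.inl j) • m (Sum.inl j)) = 0 := by
        intro j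
        rw [map_smul]
        have : π (m (Sum.inl j)) = 0 := hπB j
        rw [this, smul_zero]
      rw [Finset.sum_congr rfl (fun j _ => hzero j), Finset.sum_const_zero, zero_add]
      refine Finset.sum_congr rfl (fun i _ => ?_)
      rw [map_smul]
      rfl
    have hiex : ∃ i : Fin p, c (Sum.inr i) ≠ 0 ∧ π (C i) ∉ Submodule.span (ZMod 2)
        (π '' (C '' (idx '' {j : Fin g | j < k}))) := by
      by_contra hno
      push_neg at hno
      apply hzW
      rw [hπz]
      apply Submodule.sum_mem
      intro i _
      rcases eq_or_ne (c (Sum.inr i)) 0 with h0' | h0'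
      · rw [h0', zero_smul]; exact Submodule.zero_mem _
      · exact Submodule.smul_mem _ _ (hno i h0')
    rcases hiex with ⟨i, hci, hiW⟩
    have h1 : idx k ≤ i := hleast k i hiW
    have h2 : cw (D k) ≤ cw (C i) := hCsort (idx k) i h1
    have h3 : cw (C i) ≤ cw z :=
      mcb_support_le K.G w m hMinj hMmin hmli hmspan z hzcyc c hc (Sum.inr i) hci
    linarith
  -- sorting the weights of H'
  set L : List ℝ := (H'.toList.map cw).mergeSort (fun x y => decide (x ≤ y)) with hLdef
  have hLlen : L.length = g := by
    rw [hLdef, List.length_mergeSort, List.length_map, Finset.length_toList, hcardH']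
  have hLsorted : ∀ (i j : Fin L.length), i ≤ j → L.get i ≤ L.get j := by
    have hp := List.pairwise_mergeSort (le := fun x y : ℝ => decide (x ≤ y))
      (fun a b c hab hbc => by simp only [decide_eq_true_eq] at *; exact le_trans hab hbc)
      (fun a b => by simp only [Bool.or_eq_true, decide_eq_true_eq]; exact le_total a b)
      (H'.toList.map cw)
    intro i j hij
    rcases eq_or_lt_of_le hij with heq | hlt
    · rw [heq]
    · have := List.pairwise_iff_get.1 hp i j hlt
      simpa using this
  have hperm : L.Perm (H'.toList.map cw) := List.mergeSort_perm _ _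
  have hLsum : L.sum = setWeight K.G w H' := by
    rw [hperm.sum_eq, Finset.sum_map_toList]
    rfl
  -- the key pointwise bound
  have hkey : ∀ k : Fin g, cw (D k) ≤ L.get ⟨(k : ℕ), by rw [hLlen]; exact k.2⟩ := by
    intro k
    by_contra hlt'
    push_neg at hlt'
    have hcnt : ((k : ℕ) + 1) ≤ L.countP (fun x => decide (x < cw (D k))) := by
      have hlen1 : ((k : ℕ) + 1) ≤ L.length := by rw [hLlen]; exact k.2
      have htake : (L.take ((k : ℕ) + 1)).countP (fun x => decide (x < cw (D k)))
          = (k : ℕ) + 1 := by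
        rw [List.countP_eq_length.2, List.length_take, min_eq_left hlen1]
        intro x hx
        rw [List.mem_take_iff_getElem] at hx
        obtain ⟨i, hi, rfl⟩ := hx
        have hik : i ≤ (k : ℕ) := by omega
        have hiL : i < L.length := by omega
        have := hLsorted ⟨i, hiL⟩ ⟨(k : ℕ), by rw [hLlen]; exact k.2⟩ (by exact hik)
        simp only [decide_eq_true_eq]
        calc L[i] = L.get ⟨i, hiL⟩ := rfl
          _ ≤ L.get ⟨(k : ℕ), _⟩ := this
          _ < cw (D k) := hlt'
      calc ((k : ℕ) + 1) = (L.take ((k : ℕ) + 1)).countP (fun x => decide (x < cw (D k))) :=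
            htake.symm
        _ ≤ (L.take ((k : ℕ) + 1)).countP (fun x => decide (x < cw (D k)))
            + (L.drop ((k : ℕ) + 1)).countP (fun x => decide (x < cw (D k))) :=
            Nat.le_add_right _ _
        _ = L.countP (fun x => decide (x < cw (D k))) := by
            rw [← List.countP_append, List.take_append_drop]
    have hcnt2 : L.countP (fun x => decide (x < cw (D k)))
        = (H'.filter (fun z => cw z < cw (D k))).card := by
      rw [hperm.countP_eq, List.countP_map]
      exact countP_toList H' (fun z => cw z < cw (D k))
    have := hcount k
    omega
  -- final computation
  have hDsum : setWeight K.G w (Finset.image D Finset.univ) = ∑ k : Fin g, cw (D k) :=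
    Finset.sum_image (fun x _ y _ h => hDinj h)
  calc setWeight K.G w (Finset.image D Finset.univ) = ∑ k : Fin g, cw (D k) := hDsum
    _ ≤ ∑ k : Fin g, L.get ⟨(k : ℕ), by rw [hLlen]; exact k.2⟩ :=
        Finset.sum_le_sum (fun k _ => hkey k)
    _ = ∑ i : Fin L.length, L.get i := by
        apply Fintype.sum_equiv (finCongr hLlen.symm)
        intro k
        rfl
    _ = L.sum := by rw [← List.sum_ofFn, List.ofFn_get]
    _ = setWeight K.G w H' := hLsum


end PaperMCB
end
end

section
/- Let V be a finite-dimensional vector space over ℤ₂, let v₁, …, v_s be a list of vectors spanning a subspace of dimension r, and let w : {1, …, s} → ℝ assign each vector a weight with w(1) ≤ w(2) ≤ … ≤ w(s). Suppose that among the sets of r linearly independent vectors chosen from v₁, …, v_s there is one of minimum total weight contained in the list. Let i₁ < … < i_r be the lexicographically smallest sequence of indices such that v_{i₁}, …, v_{i_r} are linearly independent. Then {v_{i₁}, …, v_{i_r}} is a set of r linearly independent vectors from the list of minimum total weight. -/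
set_option linter.unusedSectionVars false

open scoped Classical

noncomputable section

namespace PaperMCB

section ListAux

variable {α : Type*} [LinearOrder α]

/-- Key list lemma: if two strictly sorted lists agree below `b`, `b` is in the first but
not the second, and the first is no longer than the second, then the first is lex-smaller. -/
theorem lex_of_agree_below : ∀ (l₁ l₂ : List α), l₁.Pairwise (· < ·) → l₂.Pairwise (· < ·) →
    ∀ b, b ∈ l₁ → b ∉ l₂ → (∀ x, x < b → (x ∈ l₁ ↔ x ∈ l₂)) → l₁.length ≤ l₂.length →
    List.Lex (· < ·) l₁ l₂
  | [], _, _, _, b, hb, _, _, _ => by simp at hb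
  | a :: t₁, [], _, _, b, _, _, _, hlen => by simp at hlen
  | a :: t₁, c :: t₂, h₁, h₂, b, hb₁, hb₂, hiff, hlen => by
    have ht₁ := (List.pairwise_cons.mp h₁).2
    have ht₂ := (List.pairwise_cons.mp h₂).2
    have ha_min : ∀ x ∈ t₁, a < x := (List.pairwise_cons.mp h₁).1
    have hc_min : ∀ x ∈ t₂, c < x := (List.pairwise_cons.mp h₂).1
    have hab : a ≤ b := by
      rcases List.mem_cons.mp hb₁ with rfl | h
      · exact le_refl _
      · exact (ha_min b h).le
    have hac : a ≤ c := by
      by_contra h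
      push_neg at h
      have hcb : c < b := lt_of_lt_of_le h hab
      have hcl : c ∈ a :: t₁ := (hiff c hcb).mpr (List.mem_cons_self)
      rcases List.mem_cons.mp hcl with rfl | hct
      · exact absurd h (lt_irrefl _)
      · exact absurd (ha_min c hct) (not_lt.mpr h.le)
    rcases lt_or_eq_of_le hac with hlt | rfl
    · exact List.Lex.rel hlt
    · apply List.Lex.cons
      have hba : b ≠ a := by
        rintro rfl
        exact hb₂ (List.mem_cons_self)
      have hbt₁ : b ∈ t₁ := (List.mem_cons.mp hb₁).resolve_left hba
      refine lex_of_agree_below t₁ t₂ ht₁ ht₂ b hbt₁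
        (fun h => hb₂ (List.mem_cons_of_mem _ h)) ?_ (Nat.succ_le_succ_iff.mp hlen)
      intro x hx
      constructor
      · intro hxt₁
        have hxl₂ : x ∈ a :: t₂ := (hiff x hx).mp (List.mem_cons_of_mem _ hxt₁)
        rcases List.mem_cons.mp hxl₂ with rfl | h
        · exact absurd (ha_min x hxt₁) (lt_irrefl _)
        · exact h
      · intro hxt₂
        have hxl₁ : x ∈ a :: t₁ := (hiff x hx).mpr (List.mem_cons_of_mem _ hxt₂)
        rcases List.mem_cons.mp hxl₁ with rfl | h
        · exact absurd (hc_min x hxt₂) (lt_irrefl _)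
        · exact h

theorem mem_take_sorted {L : List α} (hL : L.Pairwise (· < ·)) {k : ℕ} (hk : k < L.length) {x : α} :
    x ∈ L.take k ↔ x ∈ L ∧ x < L[k] := by
  have hP := List.pairwise_iff_getElem.mp hL
  constructor
  · intro hx
    obtain ⟨j, hj, rfl⟩ := List.mem_iff_getElem.mp hx
    have hjlen : j < L.length := lt_of_lt_of_le hj (by simp [List.length_take])
    have hjk : j < k := lt_of_lt_of_le hj (by simp [List.length_take])
    rw [List.getElem_take]
    exact ⟨List.getElem_mem _, hP j k hjlen hk hjk⟩
  · rintro ⟨hxL, hxlt⟩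
    obtain ⟨j, hj, rfl⟩ := List.mem_iff_getElem.mp hxL
    have hjk : j < k := by
      by_contra h
      push_neg at h
      rcases eq_or_lt_of_le h with rfl | h'
      · exact absurd hxlt (lt_irrefl _)
      · exact absurd (hP k j hk hj h') (not_lt.mpr hxlt.le)
    refine List.mem_iff_getElem.mpr ⟨j, by simp [List.length_take]; omega, ?_⟩
    rw [List.getElem_take]

theorem le_getElem_of_mem_take {L : List α} (hL : L.Pairwise (· < ·)) {k : ℕ} (hk : k < L.length)
    {x : α} (hx : x ∈ L.take (k + 1)) : x ≤ L[k] := by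
  have hP := List.pairwise_iff_getElem.mp hL
  obtain ⟨j, hj, rfl⟩ := List.mem_iff_getElem.mp hx
  have hjlen : j < L.length := lt_of_lt_of_le hj (by simp [List.length_take])
  have hjk : j ≤ k := by
    have := lt_of_lt_of_le hj (by simp [List.length_take] : (L.take (k+1)).length ≤ k + 1)
    omega
  rw [List.getElem_take]
  rcases eq_or_lt_of_le hjk with rfl | h'
  · exact le_refl _
  · exact (hP j k hjlen hk h').le

omit [LinearOrder α] in
theorem sum_map_le_of_forall₂ {w : α → ℝ} : ∀ {l₁ l₂ : List α},
    List.Forall₂ (fun a b => w a ≤ w b) l₁ l₂ → (l₁.map w).sum ≤ (l₂.map w).sum := by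
  intro l₁ l₂ h
  induction h with
  | nil => simp
  | cons h _ ih => simpa using add_le_add h ih

end ListAux

section LinAux

variable {M : Type*} [AddCommGroup M] [Module (ZMod 2) M] [FiniteDimensional (ZMod 2) M]
  {s : ℕ} {v : Fin s → M}

/-- Abbreviation for independence of the vectors indexed by a finset. -/
def Ind (v : Fin s → M) (J : Finset (Fin s)) : Prop :=
  LinearIndependent (ZMod 2) (fun i : (J : Set (Fin s)) => v (i : Fin s))

theorem Ind.mono {A J : Finset (Fin s)} (hJ : Ind v J) (h : A ⊆ J) : Ind v A :=
  hJ.comp (Set.inclusion (Finset.coe_subset.mpr h))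
    (Set.inclusion_injective (Finset.coe_subset.mpr h))

theorem Ind.injOn {A : Finset (Fin s)} (hA : Ind v A) : Set.InjOn v (A : Set (Fin s)) := by
  intro x hx y hy hxy
  have := hA.injective (a₁ := ⟨x, hx⟩) (a₂ := ⟨y, hy⟩) hxy
  exact congrArg Subtype.val this

theorem Ind.image_indep {A : Finset (Fin s)} (hA : Ind v A) :
    LinearIndependent (ZMod 2) ((↑) : (v '' (A : Set (Fin s))) → M) :=
  (linearIndepOn_iff_image hA.injOn).mp hA

theorem Ind.finrank_eq {A : Finset (Fin s)} (hA : Ind v A) :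
    Module.finrank (ZMod 2) (Submodule.span (ZMod 2) (v '' (A : Set (Fin s)))) = A.card := by
  have h1 : LinearIndependent (ZMod 2) ((↑) : ((A.image v : Finset M) : Set M) → M) := by
    rw [Finset.coe_image]; exact hA.image_indep
  rw [← Finset.coe_image, finrank_span_finset_eq_card h1]
  exact Finset.card_image_of_injOn hA.injOn

theorem Ind.card_le {A : Finset (Fin s)} (hA : Ind v A) :
    A.card ≤ Module.finrank (ZMod 2) (Submodule.span (ZMod 2) (Set.range v)) := by
  rw [← hA.finrank_eq]
  exact Submodule.finrank_mono (Submodule.span_mono (Set.image_subset_range _ _))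

theorem exchange_s15 {A B : Finset (Fin s)} (hA : Ind v A) (hB : Ind v B)
    (hcard : A.card < B.card) : ∃ b ∈ B, b ∉ A ∧ Ind v (insert b A) := by
  have hspan : ¬ ∀ b ∈ B, v b ∈ Submodule.span (ZMod 2) (v '' (A : Set (Fin s))) := by
    intro h
    have hle : Submodule.span (ZMod 2) (v '' (B : Set (Fin s))) ≤
        Submodule.span (ZMod 2) (v '' (A : Set (Fin s))) := by
      rw [Submodule.span_le]
      rintro _ ⟨b, hb, rfl⟩
      exact h b hb
    have := Submodule.finrank_mono hle
    rw [hA.finrank_eq, hB.finrank_eq] at this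
    omega
  push_neg at hspan
  obtain ⟨b, hbB, hbspan⟩ := hspan
  have hbA : b ∉ A := fun h => hbspan (Submodule.subset_span ⟨b, h, rfl⟩)
  have hbimg : v b ∉ v '' (A : Set (Fin s)) := fun h => hbspan (Submodule.subset_span h)
  have hins : LinearIndependent (ZMod 2)
      ((↑) : (insert (v b) (v '' (A : Set (Fin s))) : Set M) → M) :=
    LinearIndepOn.id_insert hA.image_indep hbspan
  have hinj : Set.InjOn v ((insert b A : Finset (Fin s)) : Set (Fin s)) := by
    intro x hx y hy hxy
    rw [Finset.coe_insert, Set.mem_insert_iff] at hx hy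
    rcases hx with rfl | hx <;> rcases hy with rfl | hy
    · rfl
    · exact absurd ⟨y, hy, hxy.symm⟩ hbimg
    · exact absurd ⟨x, hx, hxy⟩ hbimg
    · exact hA.injOn hx hy hxy
  refine ⟨b, hbB, hbA, ?_⟩
  refine (linearIndepOn_iff_image hinj).mpr ?_
  have himg : v '' ((insert b A : Finset (Fin s)) : Set (Fin s)) =
      insert (v b) (v '' (A : Set (Fin s))) := by
    rw [Finset.coe_insert, Set.image_insert_eq]
  rw [himg]
  exact hins

theorem extend_aux {I : Finset (Fin s)} (hI : Ind v I) :
    ∀ n (C : Finset (Fin s)), Ind v C → I.card - C.card ≤ n → C.card ≤ I.card →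
    ∃ D : Finset (Fin s), C ⊆ D ∧ D ⊆ C ∪ I ∧ D.card = I.card ∧ Ind v D := by
  intro n
  induction n with
  | zero =>
    intro C hC h1 h2
    exact ⟨C, Finset.Subset.refl _, Finset.subset_union_left, by omega, hC⟩
  | succ n ih =>
    intro C hC h1 h2
    rcases eq_or_lt_of_le h2 with heq | hlt
    · exact ⟨C, Finset.Subset.refl _, Finset.subset_union_left, heq, hC⟩
    · obtain ⟨b, hbI, hbC, hins⟩ := exchange_s15 hC hI hlt
      have hcard : (insert b C).card = C.card + 1 := Finset.card_insert_of_notMem hbC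
      obtain ⟨D, hD1, hD2, hD3, hD4⟩ := ih (insert b C) hins (by omega) (by omega)
      refine ⟨D, (Finset.subset_insert _ _).trans hD1, ?_, hD3, hD4⟩
      refine hD2.trans ?_
      intro x hx
      rcases Finset.mem_union.mp hx with hx | hx
      · rcases Finset.mem_insert.mp hx with rfl | hx
        · exact Finset.mem_union_right _ hbI
        · exact Finset.mem_union_left _ hx
      · exact Finset.mem_union_right _ hx

end LinAux

/-- The greedy/matroid principle behind the earliest-basis algorithms: given a list of
vectors over `ℤ₂` sorted in non-decreasing order of weight, the lexicographically
smallest sequence of `r` indices of linearly independent vectors yields a set of `r`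
linearly independent vectors of minimum total weight. -/
theorem lex_smallest_independent_has_min_weight
    {M : Type*} [AddCommGroup M] [Module (ZMod 2) M] [FiniteDimensional (ZMod 2) M]
    {s : ℕ} (v : Fin s → M) (w : Fin s → ℝ) (hsort : Monotone w)
    (r : ℕ) (hr : r = Module.finrank (ZMod 2) (Submodule.span (ZMod 2) (Set.range v)))
    (hexists : ∃ I₀ : Finset (Fin s), I₀.card = r ∧
      LinearIndependent (ZMod 2) (fun i : (I₀ : Set (Fin s)) => v (i : Fin s)) ∧
      ∀ J : Finset (Fin s), J.card = r →
        LinearIndependent (ZMod 2) (fun j : (J : Set (Fin s)) => v (j : Fin s)) →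
        ∑ i ∈ I₀, w i ≤ ∑ j ∈ J, w j)
    (I : Finset (Fin s)) (hIcard : I.card = r)
    (hIind : LinearIndependent (ZMod 2) (fun i : (I : Set (Fin s)) => v (i : Fin s)))
    (hIlex : ∀ J : Finset (Fin s), J.card = r →
      LinearIndependent (ZMod 2) (fun j : (J : Set (Fin s)) => v (j : Fin s)) →
      I = J ∨ List.Lex (· < ·) (I.sort (· ≤ ·)) (J.sort (· ≤ ·))) :
    I.card = r ∧
    LinearIndependent (ZMod 2) (fun i : (I : Set (Fin s)) => v (i : Fin s)) ∧
    ∀ J : Finset (Fin s), J.card = r →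
      LinearIndependent (ZMod 2) (fun j : (J : Set (Fin s)) => v (j : Fin s)) →
      ∑ i ∈ I, w i ≤ ∑ j ∈ J, w j := by
  refine ⟨hIcard, hIind, ?_⟩
  obtain ⟨I₀, hI₀card, hI₀ind, hI₀min⟩ := hexists
  have hIInd : Ind v I := hIind
  have hI₀Ind : Ind v I₀ := hI₀ind
  suffices h : ∑ i ∈ I, w i ≤ ∑ i ∈ I₀, w i by
    intro J hJ hJind
    exact h.trans (hI₀min J hJ hJind)
  set LI := I.sort (· ≤ ·) with hLI
  set LJ := I₀.sort (· ≤ ·) with hLJ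
  have hLIlen : LI.length = r := (Finset.length_sort _).trans hIcard
  have hLJlen : LJ.length = r := (Finset.length_sort _).trans hI₀card
  have hLIsorted : LI.Pairwise (· < ·) := (Finset.sortedLT_sort I).pairwise
  have hLJsorted : LJ.Pairwise (· < ·) := (Finset.sortedLT_sort I₀).pairwise
  -- key elementwise claim
  have claim : ∀ k (h1 : k < LI.length) (h2 : k < LJ.length), LI[k] ≤ LJ[k] := by
    intro k h1 h2
    by_contra hcon
    push_neg at hcon
    have hkr : k < r := by omega
    set A : Finset (Fin s) := (LI.take k).toFinset with hA
    have hAchar : ∀ x, x ∈ A ↔ x ∈ I ∧ x < LI[k] := by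
      intro x
      rw [hA, List.mem_toFinset, mem_take_sorted hLIsorted h1, Finset.mem_sort]
    have hAsub : A ⊆ I := fun x hx => ((hAchar x).mp hx).1
    have hAcard : A.card = k := by
      rw [hA, List.toFinset_card_of_nodup ((Finset.sort_nodup _ _).sublist (List.take_sublist _ _))]
      simp [List.length_take]
      omega
    set B : Finset (Fin s) := (LJ.take (k + 1)).toFinset with hB
    have hBsub : B ⊆ I₀ := fun x hx =>
      (Finset.mem_sort _).mp (List.take_subset _ _ (List.mem_toFinset.mp hx))
    have hBcard : B.card = k + 1 := by
      rw [hB, List.toFinset_card_of_nodup ((Finset.sort_nodup _ _).sublist (List.take_sublist _ _))]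
      simp [List.length_take]
      omega
    have hBle : ∀ x ∈ B, x ≤ LJ[k] := fun x hx =>
      le_getElem_of_mem_take hLJsorted h2 (List.mem_toFinset.mp hx)
    have hAind : Ind v A := hIInd.mono hAsub
    have hBind : Ind v B := hI₀Ind.mono hBsub
    obtain ⟨b, hbB, hbA, hbind⟩ := exchange_s15 hAind hBind (by omega)
    have hblt : b < LI[k] := lt_of_le_of_lt (hBle b hbB) hcon
    have hbI : b ∉ I := fun h => hbA ((hAchar b).mpr ⟨h, hblt⟩)
    have hCcard : (insert b A).card = k + 1 := by
      rw [Finset.card_insert_of_notMem hbA, hAcard]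
    have hk1r : k + 1 ≤ r := by
      have := hBind.card_le
      rw [hBcard, ← hr] at this
      exact this
    obtain ⟨D, hCD, hDsub, hDcard, hDind⟩ :=
      extend_aux hIInd (I.card - (insert b A).card) (insert b A) hbind le_rfl (by omega)
    have hbD : b ∈ D := hCD (Finset.mem_insert_self _ _)
    have hDcard' : D.card = r := hDcard.trans hIcard
    rcases hIlex D hDcard' hDind with heq | hlex
    · exact hbI (heq ▸ hbD)
    · have hiff : ∀ x, x < b → (x ∈ D.sort (· ≤ ·) ↔ x ∈ LI) := by
        intro x hx
        rw [Finset.mem_sort, hLI, Finset.mem_sort]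
        constructor
        · intro hxD
          rcases Finset.mem_union.mp (hDsub hxD) with hxC | hxI
          · rcases Finset.mem_insert.mp hxC with rfl | hxA
            · exact absurd hx (lt_irrefl _)
            · exact hAsub hxA
          · exact hxI
        · intro hxI
          exact hCD (Finset.mem_insert_of_mem ((hAchar x).mpr ⟨hxI, hx.trans hblt⟩))
      have hlex' : List.Lex (· < ·) (D.sort (· ≤ ·)) LI :=
        lex_of_agree_below _ _ (Finset.sortedLT_sort D).pairwise hLIsorted b
          ((Finset.mem_sort _).mpr hbD) (fun h => hbI ((Finset.mem_sort _).mp h)) hiff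
          (by rw [Finset.length_sort, hDcard', hLIlen])
      exact absurd hlex (asymm hlex')
  -- conclude on sums
  have hsum : ∀ X : Finset (Fin s), ∑ i ∈ X, w i = ((X.sort (· ≤ ·)).map w).sum := by
    intro X
    rw [Finset.sum_eq_multiset_sum, ← Finset.sort_eq X (· ≤ ·), Multiset.map_coe,
      Multiset.sum_coe]
  rw [hsum I, hsum I₀]
  apply sum_map_le_of_forall₂
  refine List.forall₂_iff_get.mpr ⟨by rw [hLIlen, hLJlen], ?_⟩
  intro i h1 h2
  exact hsort (claim i h1 h2)

end PaperMCB
end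
end
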